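/- arXiv:math/0312218 — 7 statements merged into one kernel-verified Lean document; each statement's English description precedes it below -/
import Mathlib

section
/- Let G be a compact abelian group with Haar measure μ, let Ω ⊆ G be a 0-symmetric open set, and let Λ ⊆ G be a finite nonempty set with (Λ − Λ) ∩ Ω ⊆ {0}. Then every continuous positive definite function f : G → ℂ whose support is contained in Ω satisfies Re(∫_G f dμ) ≤ (μ(G)/#Λ) · f(0). -/
open MeasureTheory Complex
open scoped ENNReal ComplexOrder Pointwise

/-- A function on an abelian group is positive definite. -/
def IsPosDefFn {G : Type*} [AddCommGroup G] (f : G → ℂ) : Prop :=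
  ∀ (N : ℕ) (x : Fin N → G) (c : Fin N → ℂ),
    0 ≤ ∑ n : Fin N, ∑ m : Fin N, c n * (starRingEnd ℂ) (c m) * f (x n - x m)

lemma pd_sum_finset {G : Type*} [AddCommGroup G] {f : G → ℂ} (hf : IsPosDefFn f)
    {ι : Type*} (s : Finset ι) (p : ι → G) (c : ι → ℂ) :
    0 ≤ ∑ i ∈ s, ∑ j ∈ s, c i * (starRingEnd ℂ) (c j) * f (p i - p j) := by
  classical
  have key := hf s.card (fun n => p (s.equivFin.symm n)) (fun n => c (s.equivFin.symm n))
  have hrw : ∀ (g : ι → ℂ), ∑ i ∈ s, g i = ∑ n : Fin s.card, g (s.equivFin.symm n) := by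
    intro g
    rw [← Finset.sum_attach s g]
    exact (Equiv.sum_comp s.equivFin.symm (fun a => g (a : ι))).symm
  rw [hrw (fun i => ∑ j ∈ s, c i * (starRingEnd ℂ) (c j) * f (p i - p j))]
  calc (0:ℂ) ≤ _ := key
  _ = _ := Finset.sum_congr rfl (fun n _ => (hrw fun j => c _ * (starRingEnd ℂ) (c j) * f (p _ - p j)).symm) 

lemma pd_re_neg {G : Type*} [AddCommGroup G] {f : G → ℂ} (hf : IsPosDefFn f) (y : G) :
    (f (-y)).re = (f y).re := by
  have key := hf 2 ![0, y] ![1, Complex.I]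
  simp only [Fin.sum_univ_two, Matrix.cons_val_zero, Matrix.cons_val_one, Matrix.head_cons,
    map_one, Complex.conj_I, one_mul, mul_one, sub_self, zero_sub, sub_zero] at key
  have h0 := hf 1 ![0] ![1]
  simp only [Fin.sum_univ_one, Matrix.cons_val_zero, map_one, one_mul, mul_one, sub_self] at h0
  have him0 : (f 0).im = 0 := ((Complex.le_def.mp h0).2).symm
  have him := (Complex.le_def.mp key).2
  simp [Complex.add_im, Complex.mul_im, him0] at him
  linarith

lemma pd_pointwise {G : Type*} [AddCommGroup G] {f : G → ℂ} (hf : IsPosDefFn f)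
    (Λ : Finset G) (x : G)
    (hdiag : ∑ g ∈ Λ, ∑ h ∈ Λ, (f (g - h)).re = (Λ.card : ℝ) * (f 0).re) :
    ∑ g ∈ Λ, ∑ h ∈ Λ, ((f (g + x - h)).re + (f (g - (h + x))).re)
      ≤ 2 * (Λ.card : ℝ) * (f 0).re := by
  classical
  have key := pd_sum_finset hf (Λ ×ˢ (Finset.univ : Finset Bool))
    (fun q => q.1 + (cond q.2 x 0)) (fun q => cond q.2 (-1 : ℂ) 1)
  simp only [Finset.sum_product, Fintype.sum_bool, cond_true, cond_false, map_one, map_neg,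
    mul_one, one_mul, neg_mul, mul_neg, neg_neg, add_zero, add_sub_add_right_eq_sub] at key
  have hre : (0:ℝ) ≤ ∑ g ∈ Λ, (∑ h ∈ Λ, ((f (g - h)).re + -(f (g + x - h)).re)
      + ∑ h ∈ Λ, (-(f (g - (h + x))).re + (f (g - h)).re)) := by
    have := (Complex.le_def.mp key).1
    simpa only [Complex.zero_re, Complex.re_sum, Complex.add_re, Complex.neg_re] using this
  have hsplit : ∑ g ∈ Λ, (∑ h ∈ Λ, ((f (g - h)).re + -(f (g + x - h)).re)
      + ∑ h ∈ Λ, (-(f (g - (h + x))).re + (f (g - h)).re))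
      = 2 * ((Λ.card : ℝ) * (f 0).re)
        - ∑ g ∈ Λ, ∑ h ∈ Λ, ((f (g + x - h)).re + (f (g - (h + x))).re) := by
    rw [← hdiag]
    simp only [Finset.sum_add_distrib, Finset.sum_neg_distrib]
    ring
  linarith [hre, hsplit ▸ hre]

theorem turan_bound_from_packing_compact
    {G : Type*} [AddCommGroup G] [TopologicalSpace G] [IsTopologicalAddGroup G]
    [CompactSpace G] [T2Space G] [MeasurableSpace G] [BorelSpace G]
    (μ : Measure G) [μ.IsAddHaarMeasure]
    (Ω : Set G) (hΩopen : IsOpen Ω) (hΩsym : Ω = -Ω)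
    (Λ : Finset G) (hΛne : Λ.Nonempty)
    (hΛΩ : ((Λ : Set G) - (Λ : Set G)) ∩ Ω ⊆ {0})
    (f : G → ℂ) (hf_cont : Continuous f) (hf_pd : IsPosDefFn f)
    (hf_supp : tsupport f ⊆ Ω) :
    (∫ x, f x ∂μ).re ≤ (μ Set.univ).toReal / (Λ.card : ℝ) * (f 0).re := by
  classical
  set u : G → ℝ := fun y => (f y).re with hu
  have hucont : Continuous u := Complex.continuous_re.comp hf_cont
  set I : ℝ := ∫ x, u x ∂μ with hI
  set M : ℝ := (μ Set.univ).toReal with hM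
  set N : ℕ := Λ.card with hN
  have hNpos : 0 < (N : ℝ) := by exact_mod_cast Finset.card_pos.mpr hΛne
  -- diagonal sum
  have hzero : ∀ g ∈ Λ, ∀ h ∈ Λ, g ≠ h → f (g - h) = 0 := by
    intro g hg h hh hne
    apply image_eq_zero_of_notMem_tsupport
    intro hts
    have hmem : g - h ∈ ((Λ : Set G) - (Λ : Set G)) ∩ Ω :=
      ⟨Set.sub_mem_sub hg hh, hf_supp hts⟩
    exact hne (sub_eq_zero.mp (hΛΩ hmem))
  have hdiag : ∑ g ∈ Λ, ∑ h ∈ Λ, (f (g - h)).re = (N : ℝ) * (f 0).re := by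
    have hrow : ∀ g ∈ Λ, ∑ h ∈ Λ, (f (g - h)).re = (f 0).re := by
      intro g hg
      rw [Finset.sum_eq_single_of_mem g hg
        (fun h hh hne => by rw [hzero g hg h hh hne.symm, Complex.zero_re]), sub_self]
    rw [Finset.sum_congr rfl hrow, Finset.sum_const, nsmul_eq_mul]
  -- translation invariance
  have htrans : ∀ c : G, ∫ x, u (c + x) ∂μ = I :=
    fun c => integral_add_left_eq_self (μ := μ) u c
  have hintc : ∀ c : G, Integrable (fun x => u (c + x)) μ := by
    intro c
    exact (hucont.comp (continuous_add_left c)).integrable_of_hasCompactSupport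
      (HasCompactSupport.of_compactSpace _)
  have hA : ∀ g h : G, (fun x => (f (g + x - h)).re) = fun x => u ((g - h) + x) := by
    intro g h; funext x
    show (f (g + x - h)).re = (f ((g - h) + x)).re
    rw [show g + x - h = (g - h) + x from by abel]
  have hB : ∀ g h : G, (fun x => (f (g - (h + x))).re) = fun x => u ((h - g) + x) := by
    intro g h; funext x
    have : (f (g - (h + x))).re = (f (-(g - (h + x)))).re := (pd_re_neg hf_pd _).symm
    rw [this, show -(g - (h + x)) = (h - g) + x from by abel]
  have hint1 : ∀ g h : G, Integrable (fun x => (f (g + x - h)).re) μ := by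
    intro g h; rw [hA g h]; exact hintc _
  have hint1' : ∀ g h : G, Integrable (fun x => (f (g - (h + x))).re) μ := by
    intro g h; rw [hB g h]; exact hintc _
  have hint2 : ∀ g h : G, Integrable (fun x => (f (g + x - h)).re + (f (g - (h + x))).re) μ :=
    fun g h => (hint1 g h).add (hint1' g h)
  -- integrability of the big sum
  have hF_int : Integrable
      (fun x => ∑ g ∈ Λ, ∑ h ∈ Λ, ((f (g + x - h)).re + (f (g - (h + x))).re)) μ := by
    exact integrable_finset_sum _ (fun g _ => integrable_finset_sum _ (fun h _ => hint2 g h))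
  have hmono := integral_mono hF_int (integrable_const (2 * (N : ℝ) * (f 0).re))
    (fun x => pd_pointwise hf_pd Λ x hdiag)
  rw [integral_const] at hmono
  have hLHS : ∫ x, (∑ g ∈ Λ, ∑ h ∈ Λ, ((f (g + x - h)).re + (f (g - (h + x))).re)) ∂μ
      = (N : ℝ) * ((N : ℝ) * (2 * I)) := by
    rw [integral_finset_sum _ (fun g _ => integrable_finset_sum _ (fun h _ => hint2 g h))]
    have : ∀ g ∈ Λ, ∫ x, (∑ h ∈ Λ, ((f (g + x - h)).re + (f (g - (h + x))).re)) ∂μ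
        = (N : ℝ) * (2 * I) := by
      intro g _
      rw [integral_finset_sum _ (fun h _ => hint2 g h)]
      have hterm : ∀ h ∈ Λ, ∫ x, ((f (g + x - h)).re + (f (g - (h + x))).re) ∂μ = 2 * I := by
        intro h _
        rw [integral_add (hint1 g h) (hint1' g h), hA g h, hB g h, htrans, htrans]
        ring
      rw [Finset.sum_congr rfl hterm, Finset.sum_const, nsmul_eq_mul]
    rw [Finset.sum_congr rfl this, Finset.sum_const, nsmul_eq_mul]
  rw [hLHS, smul_eq_mul] at hmono
  have hIre : (∫ x, f x ∂μ).re = I := by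
    rw [hI, hu]
    exact (integral_re (hf_cont.integrable_of_hasCompactSupport
      (HasCompactSupport.of_compactSpace _))).symm
  rw [hIre, div_mul_eq_mul_div, le_div_iff₀ hNpos]
  rw [measureReal_def] at hmono
  nlinarith [hmono, hNpos]
end

section
/- Let Λ ⊆ ℝ^d and ρ > 0 be such that Λ has upper density at least ρ, meaning: for every ε ∈ (0, ρ) and every R₀ > 0 there exist R ≥ R₀ and x ∈ ℝ^d such that the cube x + [0, R]^d contains at least (ρ − ε)·R^d points of Λ. Let Ω ⊆ ℝ^d be a 0-symmetric open set with Ω ∩ (Λ − Λ) ⊆ {0}. Then every continuous, Lebesgue-integrable, positive definite function f : ℝ^d → ℂ whose support is a compact subset of Ω satisfies Re(∫_{ℝ^d} f(x) dx) ≤ (1/ρ) · f(0). -/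
open MeasureTheory Complex
open scoped ENNReal ComplexOrder Pointwise

open Function

lemma integrable_of_bdd {α : Type*} [MeasurableSpace α] (μ : Measure α) [IsFiniteMeasure μ]
    {g : α → ℝ} (hm : AEStronglyMeasurable g μ) (M : ℝ) (h : ∀ x, |g x| ≤ M) :
    Integrable g μ :=
  (integrable_const M).mono' hm (Filter.Eventually.of_forall (by simpa [Real.norm_eq_abs] using h))

lemma map_eval_pi {ι : Type*} [Fintype ι] [DecidableEq ι] {α : ι → Type*}
    [∀ i, MeasurableSpace (α i)] (μ : ∀ i, Measure (α i)) [∀ i, IsProbabilityMeasure (μ i)]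
    (j : ι) : (Measure.pi μ).map (Function.eval j) = μ j := by
  ext s hs
  rw [Measure.map_apply (measurable_pi_apply j) hs, Set.eval_preimage, Measure.pi_pi]
  rw [Fintype.prod_eq_single j (fun i hi => by simp [Function.update_of_ne hi])]
  simp

lemma map_eval_pair_pi {ι : Type*} [Fintype ι] [DecidableEq ι] {α : Type*} [MeasurableSpace α]
    (μ : Measure α) [IsProbabilityMeasure μ] {j k : ι} (hjk : j ≠ k) :
    (Measure.pi (fun _ : ι => μ)).map (fun y => (y j, y k)) = μ.prod μ := by
  refine (Measure.prod_eq fun s t hs ht => ?_).symm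
  rw [Measure.map_apply ((measurable_pi_apply j).prodMk (measurable_pi_apply k)) (hs.prod ht)]
  have hpre : (fun y : ι → α => (y j, y k)) ⁻¹' (s ×ˢ t)
      = Set.pi Set.univ (Function.update (Function.update (fun _ => Set.univ) j s) k t) := by
    ext y
    simp only [Set.mem_preimage, Set.mem_prod, Set.mem_pi, Set.mem_univ, true_implies]
    constructor
    · rintro ⟨h1, h2⟩ i
      rcases eq_or_ne i k with rfl | hik
      · simpa using h2
      · rcases eq_or_ne i j with rfl | hij
        · simpa [Function.update_of_ne hik] using h1
        · simp [Function.update_of_ne hik, Function.update_of_ne hij]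
    · intro h
      refine ⟨?_, ?_⟩
      · have := h j
        simpa [Function.update_of_ne hjk] using this
      · have := h k
        simpa using this
  rw [hpre, Measure.pi_pi]
  rw [Finset.prod_eq_mul_of_mem j k (Finset.mem_univ _) (Finset.mem_univ _) hjk
    (fun i _ hi => by simp [Function.update_of_ne hi.2, Function.update_of_ne hi.1])]
  simp [Function.update_of_ne hjk]

lemma posdef_integral_ineq {d : ℕ} {f : (Fin d → ℝ) → ℂ}
    (hf_cont : Continuous f) {M : ℝ} (hM : ∀ x, ‖f x‖ ≤ M)
    (hf_pd : IsPosDefFn f)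
    (μ : Measure (Fin d → ℝ)) [IsProbabilityMeasure μ]
    {K : ℕ} (a : Fin K → (Fin d → ℝ)) {w : ℝ} (hw : 0 ≤ w) :
    0 ≤ (∑ n : Fin K, ∑ m : Fin K, f (a n - a m)).re
        - w * ∑ n : Fin K, ∫ y, (f (a n - y)).re ∂μ
        - w * ∑ n : Fin K, ∫ y, (f (y - a n)).re ∂μ
        + w ^ 2 * ∫ x, ∫ y, (f (x - y)).re ∂μ ∂μ := by
  have habs : ∀ x, |(f x).re| ≤ M := fun x => (Complex.abs_re_le_norm _).trans (hM x)
  set S := (∑ n : Fin K, ∑ m : Fin K, f (a n - a m)).re with hS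
  set B1 := ∑ n : Fin K, ∫ y, (f (a n - y)).re ∂μ with hB1
  set B2 := ∑ n : Fin K, ∫ y, (f (y - a n)).re ∂μ with hB2
  set I2 := ∫ x, ∫ y, (f (x - y)).re ∂μ ∂μ with hI2
  have hI2int : Integrable (fun p : (Fin d → ℝ) × (Fin d → ℝ) => (f (p.1 - p.2)).re) (μ.prod μ) :=
    integrable_of_bdd _ ((Complex.continuous_re.comp
      (hf_cont.comp (continuous_fst.sub continuous_snd))).aestronglyMeasurable) M
      (fun p => habs _)
  have key : ∀ m : ℕ, 0 ≤ S - w * B1 - w * B2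
      + w ^ 2 * (1 - 1 / ((m : ℝ) + 1)) * I2 + w ^ 2 * (1 / ((m : ℝ) + 1)) * (f 0).re := by
    intro m
    set m' : ℕ := m + 1 with hm'def
    have hm'pos : (0 : ℝ) < (m' : ℝ) := by positivity
    have hm'ne : ((m' : ℝ)) ≠ 0 := ne_of_gt hm'pos
    set s : ℝ := w / (m' : ℝ) with hsdef
    set ν := Measure.pi (fun _ : Fin m' => μ) with hν
    set cR : Fin (K + m') → ℝ := Fin.append (fun _ => (1 : ℝ)) (fun _ => -s) with hcR
    -- pointwise positivity of the quadratic form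
    have hpt : ∀ y : Fin m' → (Fin d → ℝ),
        0 ≤ ∑ i : Fin (K + m'), ∑ i' : Fin (K + m'),
          cR i * cR i' * (f (Fin.append a y i - Fin.append a y i')).re := by
      intro y
      have h0 := hf_pd (K + m') (Fin.append a y) (fun i => (cR i : ℂ))
      have h1 : (0 : ℝ) ≤ (∑ i : Fin (K + m'), ∑ i' : Fin (K + m'),
          ((cR i : ℂ)) * (starRingEnd ℂ) ((cR i' : ℂ)) *
            f (Fin.append a y i - Fin.append a y i')).re := by
        simpa using (Complex.le_def.mp h0).1
      calc (0:ℝ) ≤ _ := h1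
        _ = ∑ i : Fin (K + m'), ∑ i' : Fin (K + m'),
            cR i * cR i' * (f (Fin.append a y i - Fin.append a y i')).re := by
          rw [Complex.re_sum]
          refine Finset.sum_congr rfl fun i _ => ?_
          rw [Complex.re_sum]
          refine Finset.sum_congr rfl fun i' _ => ?_
          rw [Complex.conj_ofReal, ← Complex.ofReal_mul, Complex.re_ofReal_mul, mul_assoc]
    -- continuity of the point family
    have hP : ∀ i : Fin (K + m'),
        Continuous fun y : Fin m' → (Fin d → ℝ) => Fin.append a y i := by
      intro i
      refine Fin.addCases (fun n => ?_) (fun j => ?_) i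
      · simp only [Fin.append_left]; exact continuous_const
      · simp only [Fin.append_right]; exact continuous_apply j
    have hGc : ∀ i i' : Fin (K + m'), Continuous fun y : Fin m' → (Fin d → ℝ) =>
        cR i * cR i' * (f (Fin.append a y i - Fin.append a y i')).re := fun i i' =>
      continuous_const.mul (Complex.continuous_re.comp (hf_cont.comp ((hP i).sub (hP i'))))
    have hGint : ∀ i i' : Fin (K + m'), Integrable (fun y : Fin m' → (Fin d → ℝ) =>
        cR i * cR i' * (f (Fin.append a y i - Fin.append a y i')).re) ν := fun i i' =>
      integrable_of_bdd ν (hGc i i').aestronglyMeasurable (|cR i * cR i'| * M)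
        (fun y => by
          rw [abs_mul]
          exact mul_le_mul_of_nonneg_left (habs _) (abs_nonneg _))
    have hint : (0:ℝ) ≤ ∫ y, (∑ i : Fin (K + m'), ∑ i' : Fin (K + m'),
        cR i * cR i' * (f (Fin.append a y i - Fin.append a y i')).re) ∂ν :=
      integral_nonneg hpt
    rw [integral_finset_sum _ (fun i _ => integrable_finset_sum _ (fun i' _ => hGint i i'))]
      at hint
    rw [Finset.sum_congr rfl (fun i _ => integral_finset_sum _ (fun i' _ => hGint i i'))]
      at hint
    simp only [Fin.sum_univ_add] at hint
    simp only [hcR, Fin.append_left, Fin.append_right] at hint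
    rw [Finset.sum_add_distrib, Finset.sum_add_distrib] at hint
    -- single coordinate integrals
    have hev : ∀ (j : Fin m') (g : (Fin d → ℝ) → ℝ), Continuous g →
        (∫ y : Fin m' → (Fin d → ℝ), g (y j) ∂ν) = ∫ z, g z ∂μ := by
      intro j g hg
      rw [hν]
      calc (∫ y : Fin m' → (Fin d → ℝ), g (y j) ∂(Measure.pi fun _ : Fin m' => μ))
          = ∫ z, g z ∂((Measure.pi fun _ : Fin m' => μ).map (Function.eval j)) :=
            (integral_map (measurable_pi_apply j).aemeasurable hg.aestronglyMeasurable).symm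
        _ = ∫ z, g z ∂μ := by rw [map_eval_pi]
    have hpair : ∀ j k : Fin m', j ≠ k →
        (∫ y : Fin m' → (Fin d → ℝ), (f (y j - y k)).re ∂ν) = I2 := by
      intro j k hjk
      have hgc : Continuous fun p : (Fin d → ℝ) × (Fin d → ℝ) => (f (p.1 - p.2)).re :=
        Complex.continuous_re.comp (hf_cont.comp (continuous_fst.sub continuous_snd))
      have h2 : (∫ p : (Fin d → ℝ) × (Fin d → ℝ), (f (p.1 - p.2)).re ∂(μ.prod μ))
          = ∫ y : Fin m' → (Fin d → ℝ), (f (y j - y k)).re ∂ν := by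
        rw [hν, ← map_eval_pair_pi (ι := Fin m') μ hjk]
        exact integral_map (((measurable_pi_apply j).prodMk
          (measurable_pi_apply k)).aemeasurable) hgc.aestronglyMeasurable
      rw [← h2, hI2, integral_prod _ hI2int]
    -- block values
    have e11 : (∑ n : Fin K, ∑ n' : Fin K,
        ∫ _y : Fin m' → (Fin d → ℝ), (1:ℝ) * 1 * (f (a n - a n')).re ∂ν) = S := by
      rw [hS, Complex.re_sum]
      refine Finset.sum_congr rfl fun n _ => ?_
      rw [Complex.re_sum]
      refine Finset.sum_congr rfl fun n' _ => ?_
      simp [integral_const]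
    have e12 : (∑ n : Fin K, ∑ j : Fin m',
        ∫ y : Fin m' → (Fin d → ℝ), (1:ℝ) * -s * (f (a n - y j)).re ∂ν) = -(w * B1) := by
      have h1 : ∀ (n : Fin K) (j : Fin m'),
          (∫ y : Fin m' → (Fin d → ℝ), (1:ℝ) * -s * (f (a n - y j)).re ∂ν)
            = -s * ∫ z, (f (a n - z)).re ∂μ := by
        intro n j
        rw [show (fun y : Fin m' → (Fin d → ℝ) => (1:ℝ) * -s * (f (a n - y j)).re)
            = fun y : Fin m' → (Fin d → ℝ) =>
                (-s) • ((fun z => (f (a n - z)).re) (y j)) from funext fun y => by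
              simp [smul_eq_mul]]
        have hg : Continuous fun z : Fin d → ℝ => (f (a n - z)).re :=
          Complex.continuous_re.comp (hf_cont.comp (continuous_const.sub continuous_id))
        rw [integral_smul, hev j (fun z => (f (a n - z)).re) hg]
        simp [smul_eq_mul]
      rw [Finset.sum_congr rfl (fun n _ => Finset.sum_congr rfl (fun j _ => h1 n j))]
      simp only [Finset.sum_const, Finset.card_univ, Fintype.card_fin, nsmul_eq_mul]
      rw [← Finset.mul_sum, ← Finset.mul_sum, ← hB1]
      rw [hsdef]
      field_simp
    have e21 : (∑ j : Fin m', ∑ n : Fin K,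
        ∫ y : Fin m' → (Fin d → ℝ), -s * 1 * (f (y j - a n)).re ∂ν) = -(w * B2) := by
      have h1 : ∀ (j : Fin m') (n : Fin K),
          (∫ y : Fin m' → (Fin d → ℝ), -s * 1 * (f (y j - a n)).re ∂ν)
            = -s * ∫ z, (f (z - a n)).re ∂μ := by
        intro j n
        rw [show (fun y : Fin m' → (Fin d → ℝ) => -s * 1 * (f (y j - a n)).re)
            = fun y : Fin m' → (Fin d → ℝ) =>
                (-s) • ((fun z => (f (z - a n)).re) (y j)) from funext fun y => by
              simp [smul_eq_mul]]
        have hg : Continuous fun z : Fin d → ℝ => (f (z - a n)).re :=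
          Complex.continuous_re.comp (hf_cont.comp (continuous_id.sub continuous_const))
        rw [integral_smul, hev j (fun z => (f (z - a n)).re) hg]
        simp [smul_eq_mul]
      rw [Finset.sum_congr rfl (fun j _ => Finset.sum_congr rfl (fun n _ => h1 j n))]
      simp only [← Finset.mul_sum]
      rw [Finset.sum_const, Finset.card_univ, Fintype.card_fin, nsmul_eq_mul, ← hB2]
      rw [hsdef]
      field_simp
    have e22 : (∑ j : Fin m', ∑ k : Fin m',
        ∫ y : Fin m' → (Fin d → ℝ), -s * -s * (f (y j - y k)).re ∂ν)
          = w ^ 2 * (1 - 1 / (m' : ℝ)) * I2 + w ^ 2 * (1 / (m' : ℝ)) * (f 0).re := by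
      have h1 : ∀ j k : Fin m',
          (∫ y : Fin m' → (Fin d → ℝ), -s * -s * (f (y j - y k)).re ∂ν)
            = s ^ 2 * if j = k then (f 0).re else I2 := by
        intro j k
        rcases eq_or_ne j k with rfl | hjk
        · simp only [sub_self, eq_self_iff_true, if_true]
          rw [integral_const]
          simp only [measureReal_def, measure_univ, ENNReal.toReal_one, one_smul]
          ring
        · rw [show (fun y : Fin m' → (Fin d → ℝ) => -s * -s * (f (y j - y k)).re)
              = fun y : Fin m' → (Fin d → ℝ) =>
                  (-s * -s) • ((f (y j - y k)).re) from funext fun y => by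
                simp [smul_eq_mul]]
          rw [integral_smul, hpair j k hjk, if_neg hjk, smul_eq_mul]
          ring
      rw [Finset.sum_congr rfl (fun j _ => Finset.sum_congr rfl (fun k _ => h1 j k))]
      have h2 : ∀ j : Fin m', (∑ k : Fin m', s ^ 2 * if j = k then (f 0).re else I2)
          = s ^ 2 * (((m' : ℝ) - 1) * I2 + (f 0).re) := by
        intro j
        rw [← Finset.mul_sum]
        congr 1
        have h3 : ∀ k : Fin m', (if j = k then (f 0).re else I2)
            = I2 + (if j = k then (f 0).re - I2 else 0) := by
          intro k; by_cases h : j = k <;> simp [h]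
        rw [Finset.sum_congr rfl (fun k _ => h3 k), Finset.sum_add_distrib, Finset.sum_const,
          Finset.sum_ite_eq, Finset.card_univ, Fintype.card_fin]
        simp [nsmul_eq_mul]
        ring
      rw [Finset.sum_congr rfl (fun j _ => h2 j), Finset.sum_const, Finset.card_univ,
        Fintype.card_fin, nsmul_eq_mul]
      rw [hsdef]
      field_simp
    rw [e11, e12, e21, e22] at hint
    have hcast : ((m' : ℝ)) = (m : ℝ) + 1 := by rw [hm'def]; push_cast; ring
    rw [hcast] at hint
    linarith
  -- take the limit in m
  have h0 := tendsto_one_div_add_atTop_nhds_zero_nat (𝕜 := ℝ)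
  have t1 : Filter.Tendsto (fun m : ℕ => w ^ 2 * (1 - 1 / ((m : ℝ) + 1)) * I2)
      Filter.atTop (nhds (w ^ 2 * (1 - 0) * I2)) :=
    ((h0.const_sub 1).const_mul (w ^ 2)).mul_const I2
  have t2 : Filter.Tendsto (fun m : ℕ => w ^ 2 * (1 / ((m : ℝ) + 1)) * (f 0).re)
      Filter.atTop (nhds (w ^ 2 * 0 * (f 0).re)) :=
    (h0.const_mul (w ^ 2)).mul_const _
  have hL : Filter.Tendsto (fun m : ℕ => S - w * B1 - w * B2
      + w ^ 2 * (1 - 1 / ((m : ℝ) + 1)) * I2 + w ^ 2 * (1 / ((m : ℝ) + 1)) * (f 0).re)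
      Filter.atTop (nhds (S - w * B1 - w * B2 + w ^ 2 * (1 - 0) * I2 + w ^ 2 * 0 * (f 0).re)) :=
    (tendsto_const_nhds.add t1).add t2
  have hfin := ge_of_tendsto' hL key
  have hval : S - w * B1 - w * B2 + w ^ 2 * (1 - 0) * I2 + w ^ 2 * 0 * (f 0).re
      = S - w * B1 - w * B2 + w ^ 2 * I2 := by ring
  linarith

theorem turan_bound_from_packing_Rd
    {d : ℕ} (Λ : Set (Fin d → ℝ)) (ρ : ℝ) (hρ : 0 < ρ)
    (hdens : ∀ ε : ℝ, 0 < ε → ε < ρ → ∀ R₀ : ℝ, 0 < R₀ →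
      ∃ R : ℝ, R₀ ≤ R ∧ ∃ x : Fin d → ℝ, ∃ F : Finset (Fin d → ℝ),
        (F : Set (Fin d → ℝ)) ⊆ Λ ∩ Set.univ.pi (fun i => Set.Icc (x i) (x i + R)) ∧
        (ρ - ε) * R ^ d ≤ (F.card : ℝ))
    (Ω : Set (Fin d → ℝ)) (hΩopen : IsOpen Ω) (hΩsym : Ω = -Ω)
    (hΛΩ : Ω ∩ (Λ - Λ) ⊆ {0})
    (f : (Fin d → ℝ) → ℂ) (hf_cont : Continuous f) (hf_int : Integrable f volume)
    (hf_pd : IsPosDefFn f)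
    (hf_cpt : IsCompact (tsupport f)) (hf_supp : tsupport f ⊆ Ω) :
    (∫ x, f x).re ≤ (1 / ρ) * (f 0).re := by
  classical
  have hcs : HasCompactSupport f := hf_cpt
  obtain ⟨M, hM⟩ := hcs.exists_bound_of_continuous hf_cont
  have habs : ∀ x, |(f x).re| ≤ M := fun x => (Complex.abs_re_le_norm _).trans (hM x)
  have hf0 : 0 ≤ (f 0).re := by
    have h := hf_pd 1 (fun _ => 0) (fun _ => 1)
    have h2 := (Complex.le_def.mp h).1
    simpa using h2
  set J := (∫ x, f x).re with hJ
  by_cases hJpos : J ≤ 0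
  · calc J ≤ 0 := hJpos
      _ ≤ (1/ρ) * (f 0).re := by positivity
  push_neg at hJpos
  obtain ⟨r, hr0, hr⟩ : ∃ r, 0 < r ∧ tsupport f ⊆ Metric.closedBall 0 r := by
    obtain ⟨r, hr1, hr2⟩ := hf_cpt.isBounded.subset_closedBall_lt 0 0
    exact ⟨r, hr1, hr2⟩
  set I1 := ∫ x, ‖f x‖ with hI1def
  have hI1nn : 0 ≤ I1 := integral_nonneg fun x => norm_nonneg _
  have hJre : (∫ x, (f x).re) = J := by
    rw [hJ]
    have := integral_re (μ := (volume : Measure (Fin d → ℝ))) hf_int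
    simpa using this
  -- the main inequality for each admissible ε
  have main : ∀ ε : ℝ, 0 < ε → ε < ρ → (ρ - ε) * J ≤ (f 0).re := by
    intro ε hε hερ
    set t := ρ - ε with htdef
    have ht : 0 < t := by rw [htdef]; linarith
    refine le_of_forall_pos_le_add fun η hη => ?_
    -- choose R₀ from the limit
    have hlim : Filter.Tendsto (fun R : ℝ => t * (((R + 2*r)^d - R^d)/R^d) * I1)
        Filter.atTop (nhds 0) := by
      have h2 : (fun R : ℝ => 1 + 2*r/R) =ᶠ[Filter.atTop] fun R => (R + 2*r)/R := by
        filter_upwards [Filter.eventually_gt_atTop 0] with R hR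
        field_simp
      have h3 : Filter.Tendsto (fun R : ℝ => 1 + 2*r/R) Filter.atTop (nhds (1 + 0)) :=
        tendsto_const_nhds.add (Filter.Tendsto.div_atTop tendsto_const_nhds Filter.tendsto_id)
      have h1 : Filter.Tendsto (fun R : ℝ => (R + 2*r)/R) Filter.atTop (nhds 1) := by
        simpa using h3.congr' h2
      have hpow : Filter.Tendsto (fun R : ℝ => ((R + 2*r)/R)^d) Filter.atTop (nhds 1) := by
        simpa using h1.pow d
      have hq : (fun R : ℝ => ((R + 2*r)/R)^d - 1)
          =ᶠ[Filter.atTop] fun R => ((R + 2*r)^d - R^d)/R^d := by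
        filter_upwards [Filter.eventually_gt_atTop 0] with R hR
        have hRd : R^d ≠ 0 := pow_ne_zero _ (ne_of_gt hR)
        rw [div_pow, sub_div, div_self hRd]
      have h5 : Filter.Tendsto (fun R : ℝ => ((R + 2*r)^d - R^d)/R^d) Filter.atTop (nhds 0) := by
        have := (hpow.sub_const 1).congr' hq
        simpa using this
      have := (h5.const_mul t).mul_const I1
      simpa using this
    have hev : ∀ᶠ R in Filter.atTop, t * (((R + 2*r)^d - R^d)/R^d) * I1 < η :=
      hlim.eventually_lt_const hη
    obtain ⟨R₀, hR₀⟩ := Filter.eventually_atTop.mp hev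
    obtain ⟨R, hRge, x₀, F, hF, hFcard⟩ := hdens ε hε hερ (max R₀ 1) (by positivity)
    have hR1 : (1:ℝ) ≤ R := le_trans (le_max_right _ _) hRge
    have hR0' : R₀ ≤ R := le_trans (le_max_left _ _) hRge
    have hRpos : (0:ℝ) < R := lt_of_lt_of_le one_pos hR1
    have hRd : (0:ℝ) < R^d := by positivity
    set K := F.card with hKdef
    have hKlb : (ρ - ε) * R^d ≤ (K:ℝ) := hFcard
    have hKpos : (0:ℝ) < K := lt_of_lt_of_le (by positivity) hKlb
    -- the cubes
    set C : Set (Fin d → ℝ) := Set.univ.pi (fun i => Set.Icc (x₀ i - r) (x₀ i + R + r))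
      with hCdef
    set Qin : Set (Fin d → ℝ) := Set.univ.pi (fun i => Set.Icc (x₀ i) (x₀ i + R)) with hQdef
    have hCmeas : MeasurableSet C := MeasurableSet.univ_pi fun i => measurableSet_Icc
    have hQmeas : MeasurableSet Qin := MeasurableSet.univ_pi fun i => measurableSet_Icc
    have hQsubC : Qin ⊆ C := by
      rw [hCdef, hQdef]
      exact Set.pi_mono fun i _ => Set.Icc_subset_Icc (by linarith) (by linarith)
    set V := (R + 2*r)^d with hVdef
    have hVpos : 0 < V := by positivity
    have hvolC : volume C = ENNReal.ofReal (R + 2*r) ^ d := by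
      rw [hCdef, volume_pi_pi]
      have : ∀ i : Fin d, volume (Set.Icc (x₀ i - r) (x₀ i + R + r))
          = ENNReal.ofReal (R + 2*r) := by
        intro i
        rw [Real.volume_Icc]
        congr 1
        ring
      simp [this]
    have hvolQ : volume Qin = ENNReal.ofReal R ^ d := by
      rw [hQdef, volume_pi_pi]
      have : ∀ i : Fin d, volume (Set.Icc (x₀ i) (x₀ i + R)) = ENNReal.ofReal R := by
        intro i
        rw [Real.volume_Icc]
        congr 1
        ring
      simp [this]
    have hCfin : volume C < ⊤ := by
      rw [hvolC]
      exact ENNReal.pow_lt_top ENNReal.ofReal_lt_top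
    have hCne : volume C ≠ 0 := by
      rw [hvolC]
      exact pow_ne_zero _ (ne_of_gt (ENNReal.ofReal_pos.mpr (by linarith)))
    have hVtoReal : (volume C).toReal = V := by
      rw [hvolC, ENNReal.toReal_pow, ENNReal.toReal_ofReal (by linarith), hVdef]
    have hQtoReal : (volume Qin).toReal = R^d := by
      rw [hvolQ, ENNReal.toReal_pow, ENNReal.toReal_ofReal (by linarith)]
    -- probability measure on C
    set Cm : Measure (Fin d → ℝ) := (volume C)⁻¹ • volume.restrict C with hCm
    haveI hCmprob : IsProbabilityMeasure Cm := by
      constructor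
      rw [hCm, Measure.smul_apply, Measure.restrict_apply MeasurableSet.univ, Set.univ_inter,
        smul_eq_mul, ENNReal.inv_mul_cancel hCne hCfin.ne]
    haveI hfinres : IsFiniteMeasure (volume.restrict C) := by
      constructor
      rw [Measure.restrict_apply MeasurableSet.univ, Set.univ_inter]
      exact hCfin
    -- enumeration of F
    set a : Fin K → (Fin d → ℝ) := fun n => ((F.equivFin.symm n : F) : Fin d → ℝ) with hadef
    have haF : ∀ n, a n ∈ F := fun n => (F.equivFin.symm n).2
    have haΛ : ∀ n, a n ∈ Λ := fun n => (hF (haF n)).1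
    have haQ : ∀ n, a n ∈ Qin := fun n => (hF (haF n)).2
    have hainj : Function.Injective a := fun n m h =>
      F.equivFin.symm.injective (Subtype.ext h)
    -- diagonal structure of the Gram sum
    have hfab : ∀ n m : Fin K, n ≠ m → f (a n - a m) = 0 := by
      intro n m hnm
      by_contra hne
      have hmem : a n - a m ∈ tsupport f := subset_tsupport f (Function.mem_support.mpr hne)
      have hΩΛ : a n - a m ∈ Ω ∩ (Λ - Λ) := ⟨hf_supp hmem, Set.sub_mem_sub (haΛ n) (haΛ m)⟩
      have h0 : a n - a m = 0 := hΛΩ hΩΛ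
      exact hnm (hainj (by rwa [sub_eq_zero] at h0))
    have hSval : (∑ n : Fin K, ∑ m : Fin K, f (a n - a m)).re = K * (f 0).re := by
      rw [Complex.re_sum]
      have hrow : ∀ n : Fin K, (∑ m : Fin K, f (a n - a m)).re = (f 0).re := by
        intro n
        rw [Complex.re_sum]
        have hterm : ∀ m2 : Fin K, (f (a n - a m2)).re = if n = m2 then (f 0).re else 0 := by
          intro m2
          rcases eq_or_ne n m2 with rfl | h
          · simp
          · simp [h, hfab n m2 h]
        rw [Finset.sum_congr rfl fun m2 _ => hterm m2, Finset.sum_ite_eq]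
        simp
      rw [Finset.sum_congr rfl fun n _ => hrow n, Finset.sum_const, Finset.card_univ,
        Fintype.card_fin, nsmul_eq_mul]
    -- vanishing off C
    have hcomp_bound : ∀ b y : Fin d → ℝ, b - y ∈ tsupport f → ∀ i, |b i - y i| ≤ r := by
      intro b y hby i
      have h1 : dist (b - y) 0 ≤ r := (hr hby)
      have h2 : ‖b - y‖ ≤ r := by rwa [dist_zero_right] at h1
      calc |b i - y i| = ‖(b - y) i‖ := by simp [Real.norm_eq_abs]
        _ ≤ ‖b - y‖ := norm_le_pi_norm _ i
        _ ≤ r := h2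
    have hsupp1 : ∀ b : Fin d → ℝ, b ∈ Qin → ∀ y, y ∉ C → f (b - y) = 0 := by
      intro b hb y hy
      by_contra hne
      apply hy
      have hbd := hcomp_bound b y (subset_tsupport f (Function.mem_support.mpr hne))
      rw [hQdef, Set.mem_univ_pi] at hb
      rw [hCdef, Set.mem_univ_pi]
      intro i
      obtain ⟨hl, hu⟩ := abs_le.mp (hbd i)
      obtain ⟨h3, h4⟩ := hb i
      exact ⟨by linarith, by linarith⟩
    have hsupp2 : ∀ b : Fin d → ℝ, b ∈ Qin → ∀ y, y ∉ C → f (y - b) = 0 := by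
      intro b hb y hy
      by_contra hne
      apply hy
      have hbd := hcomp_bound y b (subset_tsupport f (Function.mem_support.mpr hne))
      rw [hQdef, Set.mem_univ_pi] at hb
      rw [hCdef, Set.mem_univ_pi]
      intro i
      obtain ⟨hl, hu⟩ := abs_le.mp (hbd i)
      obtain ⟨h3, h4⟩ := hb i
      exact ⟨by linarith, by linarith⟩
    -- set integrals over C
    have hB1C : ∀ b : Fin d → ℝ, b ∈ Qin → (∫ y in C, (f (b - y)).re) = J := by
      intro b hb
      rw [setIntegral_eq_integral_of_forall_compl_eq_zero
        (fun y hy => by rw [hsupp1 b hb y hy]; simp)]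
      rw [integral_sub_left_eq_self (fun z => (f z).re) volume b, hJre]
    have hB2C : ∀ b : Fin d → ℝ, b ∈ Qin → (∫ y in C, (f (y - b)).re) = J := by
      intro b hb
      rw [setIntegral_eq_integral_of_forall_compl_eq_zero
        (fun y hy => by rw [hsupp2 b hb y hy]; simp)]
      rw [integral_sub_right_eq_self (fun z => (f z).re) b, hJre]
    -- conversion between Cm-integrals and set integrals
    have hμint : ∀ g : (Fin d → ℝ) → ℝ, (∫ y, g y ∂Cm) = V⁻¹ * ∫ y in C, g y := by
      intro g
      rw [hCm, integral_smul_measure, ENNReal.toReal_inv, hVtoReal, smul_eq_mul]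
    -- the A term
    set A := ∫ x in C, ∫ y in C, (f (x - y)).re with hAdef
    have hprodC_int : Integrable (fun p : (Fin d → ℝ) × (Fin d → ℝ) => (f (p.1 - p.2)).re)
        ((volume.restrict C).prod (volume.restrict C)) :=
      integrable_of_bdd _ ((Complex.continuous_re.comp
        (hf_cont.comp (continuous_fst.sub continuous_snd))).aestronglyMeasurable) M
        (fun p => habs _)
    have hg_int : IntegrableOn (fun x => ∫ y in C, (f (x - y)).re) C volume :=
      hprodC_int.integral_prod_left
    have hgle : ∀ x : Fin d → ℝ, (∫ y in C, (f (x - y)).re) ≤ I1 := by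
      intro x
      have hint1 : Integrable (fun y => f (x - y)) (volume : Measure (Fin d → ℝ)) :=
        hf_int.comp_sub_left x
      have h1 : (∫ y in C, (f (x - y)).re) ≤ ∫ y in C, ‖f (x - y)‖ := by
        refine setIntegral_mono (hint1.re.integrableOn) (hint1.norm.integrableOn) ?_
        intro y
        exact Complex.re_le_norm _
      have h2 : (∫ y in C, ‖f (x - y)‖) ≤ ∫ y, ‖f (x - y)‖ :=
        setIntegral_le_integral hint1.norm (Filter.Eventually.of_forall fun y => norm_nonneg _)
      have h3 : (∫ y, ‖f (x - y)‖) = I1 := by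
        rw [hI1def, integral_sub_left_eq_self (fun z => ‖f z‖) volume x]
      linarith
    have hQCvol : (volume (C \ Qin)).toReal = V - R^d := by
      rw [measure_diff hQsubC hQmeas.nullMeasurableSet
        (lt_of_le_of_lt (measure_mono hQsubC) hCfin).ne,
        ENNReal.toReal_sub_of_le (measure_mono hQsubC)  hCfin.ne, hVtoReal, hQtoReal]
    have hAbound : A ≤ R^d * J + (V - R^d) * I1 := by
      have hsplit : A = (∫ x in Qin, ∫ y in C, (f (x - y)).re)
          + ∫ x in C \ Qin, ∫ y in C, (f (x - y)).re := by
        rw [show A = ∫ x in Qin ∪ (C \ Qin), ∫ y in C, (f (x - y)).re from by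
          rw [Set.union_diff_cancel hQsubC]]
        exact setIntegral_union Set.disjoint_sdiff_right (hCmeas.diff hQmeas)
          (hg_int.mono_set hQsubC) (hg_int.mono_set Set.diff_subset)
      have h1 : (∫ x in Qin, ∫ y in C, (f (x - y)).re) = R^d * J := by
        rw [setIntegral_congr_fun hQmeas (fun x hx => hB1C x hx), setIntegral_const, measureReal_def, hQtoReal,
          smul_eq_mul]
      have h2 : (∫ x in C \ Qin, ∫ y in C, (f (x - y)).re) ≤ (V - R^d) * I1 := by
        have hconst : IntegrableOn (fun _ : Fin d → ℝ => I1) (C \ Qin) volume := by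
          exact integrableOn_const (lt_of_le_of_lt (measure_mono Set.diff_subset) hCfin).ne
        calc (∫ x in C \ Qin, ∫ y in C, (f (x - y)).re)
            ≤ ∫ _x in C \ Qin, I1 :=
              setIntegral_mono_on (hg_int.mono_set Set.diff_subset) hconst
                (hCmeas.diff hQmeas) (fun x _ => hgle x)
          _ = (V - R^d) * I1 := by rw [setIntegral_const, measureReal_def, hQCvol, smul_eq_mul]
      linarith [hsplit, h1, h2]
    -- apply the key positivity lemma
    have hkey := posdef_integral_ineq hf_cont hM hf_pd Cm a
      (w := t * V) (by positivity)
    rw [hSval] at hkey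
    have hb1 : (∑ n : Fin K, ∫ y, (f (a n - y)).re ∂Cm) = K * (V⁻¹ * J) := by
      rw [Finset.sum_congr rfl (fun n _ => by rw [hμint, hB1C (a n) (haQ n)]),
        Finset.sum_const, Finset.card_univ, Fintype.card_fin, nsmul_eq_mul]
    have hb2 : (∑ n : Fin K, ∫ y, (f (y - a n)).re ∂Cm) = K * (V⁻¹ * J) := by
      rw [Finset.sum_congr rfl (fun n _ => by rw [hμint, hB2C (a n) (haQ n)]),
        Finset.sum_const, Finset.card_univ, Fintype.card_fin, nsmul_eq_mul]
    have hdbl : (∫ x, ∫ y, (f (x - y)).re ∂Cm ∂Cm) = V⁻¹ * (V⁻¹ * A) := by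
      have hin : (fun x => ∫ y, (f (x - y)).re ∂Cm)
          = fun x => V⁻¹ • (∫ y in C, (f (x - y)).re) := by
        funext x
        rw [hμint, smul_eq_mul]
      rw [hin, integral_smul, hμint, hAdef, smul_eq_mul]
    rw [hb1, hb2, hdbl] at hkey
    have hVne : V ≠ 0 := ne_of_gt hVpos
    have hkey2 : 0 ≤ (K:ℝ) * (f 0).re - 2*(t*((K:ℝ)*J)) + t^2*A := by
      have e1 : t * V * ((K:ℝ) * (V⁻¹ * J)) = t * ((K:ℝ) * J) := by
        field_simp
      have e2 : (t * V)^2 * (V⁻¹ * (V⁻¹ * A)) = t^2 * A := by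
        field_simp
      rw [e1, e2] at hkey
      linarith
    -- assemble
    have h5 : t^2 * (R^d * J) ≤ t * ((K:ℝ) * J) := by
      have htR : t * R^d ≤ (K:ℝ) := by rw [htdef]; exact hKlb
      calc t^2 * (R^d * J) = (t * R^d) * (t * J) := by ring
        _ ≤ (K:ℝ) * (t * J) := by
          apply mul_le_mul_of_nonneg_right htR
          positivity
        _ = t * ((K:ℝ) * J) := by ring
    have h4 : t^2 * A ≤ t^2 * (R^d * J + (V - R^d) * I1) :=
      mul_le_mul_of_nonneg_left hAbound (by positivity)
    have h4' : t^2 * (R^d * J + (V - R^d) * I1)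
        = t^2 * (R^d * J) + t^2 * ((V - R^d) * I1) := by ring
    have he : (K:ℝ) * (t * J) = t * ((K:ℝ) * J) := by ring
    have h6 : (K:ℝ) * (t * J) ≤ (K:ℝ) * (f 0).re + t^2 * ((V - R^d) * I1) := by
      linarith [hkey2, h4, h4', h5, he]
    have h8 : t * J - (f 0).re ≤ t^2 * ((V - R^d) * I1) / (K:ℝ) := by
      rw [le_div_iff₀ hKpos]
      have hexp2 : (t * J - (f 0).re) * (K:ℝ)
          = (K:ℝ) * (t * J) - (K:ℝ) * (f 0).re := by ring
      linarith [h6, hexp2.le, hexp2.ge]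
    have hVR : 0 ≤ V - R^d := by
      rw [hVdef]
      have := pow_le_pow_left₀ (le_of_lt hRpos) (by linarith : R ≤ R + 2*r) d
      linarith
    have h9 : t^2 * ((V - R^d) * I1) / (K:ℝ) ≤ t^2 * ((V - R^d) * I1) / (t * R^d) := by
      apply div_le_div_of_nonneg_left (by positivity) (by positivity)
      rw [htdef]
      exact hKlb
    have h10 : t^2 * ((V - R^d) * I1) / (t * R^d) = t * (((R + 2*r)^d - R^d)/R^d) * I1 := by
      rw [hVdef]
      field_simp
    have hη' : t * (((R + 2*r)^d - R^d)/R^d) * I1 < η := hR₀ R hR0'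
    have : t * J ≤ (f 0).re + η := by
      have h11 := (h8.trans (h9.trans_eq h10)).trans_lt hη'
      linarith
    rw [htdef] at this
    exact this
  -- conclude from the per-ε inequality
  have hρJ : ρ * J ≤ (f 0).re := by
    refine le_of_forall_pos_le_add fun η hη => ?_
    set ε := min (ρ/2) (η/J) with hεdef
    have hε1 : 0 < ε := lt_min (by positivity) (by positivity)
    have hε2 : ε < ρ := lt_of_le_of_lt (min_le_left _ _) (by linarith)
    have h := main ε hε1 hε2
    have hεJ : ε * J ≤ η := by
      have hle : ε ≤ η/J := min_le_right _ _
      calc ε * J ≤ (η/J) * J := mul_le_mul_of_nonneg_right hle (le_of_lt hJpos)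
        _ = η := by field_simp
    have hexp : (ρ - ε) * J = ρ * J - ε * J := by ring
    linarith [h, hεJ, hexp.le, hexp.ge]
  have hfin2 : J ≤ (f 0).re / ρ := (le_div_iff₀ hρ).mpr (by rw [mul_comm]; exact hρJ)
  calc J ≤ (f 0).re / ρ := hfin2
    _ = (1/ρ) * (f 0).re := by rw [div_eq_mul_inv, one_div, mul_comm]
end

section
/- Let Λ ⊆ ℤ^d and ρ > 0 be such that Λ has upper density at least ρ, meaning: for every ε ∈ (0, ρ) and every R₀ ∈ ℕ there exist an integer R ≥ R₀ and x ∈ ℤ^d such that the discrete cube x + {0, 1, …, R−1}^d contains at least (ρ − ε)·R^d points of Λ. Let Ω ⊆ ℤ^d be a 0-symmetric set with Ω ∩ (Λ − Λ) ⊆ {0}. Then every positive definite function f : ℤ^d → ℂ with finite support contained in Ω satisfies Re(∑_{x ∈ ℤ^d} f(x)) ≤ (1/ρ) · f(0). -/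
set_option maxHeartbeats 1000000

open Complex
open scoped ComplexOrder Pointwise BigOperators

open Filter
open scoped Topology

lemma pd_zero {G : Type*} [AddCommGroup G] {f : G → ℂ} (hf : IsPosDefFn f) :
    0 ≤ (f 0).re ∧ (f 0).im = 0 := by
  have h := hf 1 (fun _ => 0) (fun _ => 1)
  simp only [Fin.sum_univ_one, one_mul, map_one, sub_self] at h
  rw [Complex.le_def] at h
  simpa using ⟨h.1, (h.2).symm⟩

lemma pd_even {G : Type*} [AddCommGroup G] {f : G → ℂ} (hf : IsPosDefFn f) (x : G) :
    (f (-x)).re = (f x).re := by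
  have h0 := (pd_zero hf).2
  have h := hf 2 ![0, x] ![1, Complex.I]
  rw [Complex.le_def] at h
  have him := h.2
  simp only [Fin.sum_univ_two, Matrix.cons_val_zero, Matrix.cons_val_one, Matrix.head_cons,
    map_one, one_mul, mul_one, sub_self, zero_sub, sub_zero, Complex.add_im, Complex.mul_im,
    Complex.zero_im, Complex.I_re, Complex.I_im, Complex.one_re, Complex.one_im,
    Complex.conj_I, Complex.mul_re, Complex.neg_im, Complex.neg_re] at him
  rw [h0] at him
  linarith [him]

lemma pd_finset {G : Type*} [AddCommGroup G] [DecidableEq G] {f : G → ℂ}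
    (hf : IsPosDefFn f) (Q : Finset G) (c : G → ℝ) :
    0 ≤ ∑ x ∈ Q, ∑ y ∈ Q, c x * c y * (f (x - y)).re := by
  have h := hf Q.card (fun n => ((Q.equivFin.symm n : {z // z ∈ Q}) : G))
      (fun n => ((c ((Q.equivFin.symm n : {z // z ∈ Q}) : G) : ℂ)))
  rw [Complex.le_def] at h
  have hre := h.1
  rw [Complex.zero_re, Complex.re_sum] at hre
  have hre2 : (0:ℝ) ≤ ∑ n : Fin Q.card, ∑ m : Fin Q.card,
      c ((Q.equivFin.symm n : {z // z ∈ Q}) : G) * c ((Q.equivFin.symm m : {z // z ∈ Q}) : G) *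
        (f (((Q.equivFin.symm n : {z // z ∈ Q}) : G) - ((Q.equivFin.symm m : {z // z ∈ Q}) : G))).re := by
    refine le_trans hre (le_of_eq ?_)
    refine Finset.sum_congr rfl fun n _ => ?_
    rw [Complex.re_sum]
    refine Finset.sum_congr rfl fun m _ => ?_
    rw [Complex.conj_ofReal, ← Complex.ofReal_mul, Complex.re_ofReal_mul]
  refine le_trans hre2 (le_of_eq ?_)
  have key : ∀ (F2 : G → G → ℝ), (∑ n : Fin Q.card, ∑ m : Fin Q.card,
      F2 ((Q.equivFin.symm n : {z // z ∈ Q}) : G) ((Q.equivFin.symm m : {z // z ∈ Q}) : G))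
      = ∑ x ∈ Q, ∑ y ∈ Q, F2 x y := by
    intro F2
    calc (∑ n : Fin Q.card, ∑ m : Fin Q.card,
        F2 ((Q.equivFin.symm n : {z // z ∈ Q}) : G) ((Q.equivFin.symm m : {z // z ∈ Q}) : G))
        = ∑ q : {z // z ∈ Q}, ∑ m : Fin Q.card, F2 q ((Q.equivFin.symm m : {z // z ∈ Q}) : G) :=
          Equiv.sum_comp Q.equivFin.symm
            (fun q : {z // z ∈ Q} => ∑ m : Fin Q.card, F2 q ((Q.equivFin.symm m : {z // z ∈ Q}) : G))
      _ = ∑ q : {z // z ∈ Q}, ∑ r : {z // z ∈ Q}, F2 q r := by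
          refine Finset.sum_congr rfl fun q _ =>
            Equiv.sum_comp Q.equivFin.symm (fun r : {z // z ∈ Q} => F2 q r)
      _ = ∑ x ∈ Q, ∑ y ∈ Q, F2 x y := by
          rw [← Finset.sum_coe_sort Q (fun x => ∑ y ∈ Q, F2 x y)]
          exact Finset.sum_congr rfl fun q _ => Finset.sum_coe_sort Q (fun y => F2 q y)
  exact key (fun x y => c x * c y * (f (x - y)).re)

theorem turan_bound_from_packing_Zd
    {d : ℕ} (Λ : Set (Fin d → ℤ)) (ρ : ℝ) (hρ : 0 < ρ)
    (hdens : ∀ ε : ℝ, 0 < ε → ε < ρ → ∀ R₀ : ℕ,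
      ∃ R : ℕ, R₀ ≤ R ∧ ∃ x : Fin d → ℤ, ∃ F : Finset (Fin d → ℤ),
        (F : Set (Fin d → ℤ)) ⊆ Λ ∩ Set.univ.pi (fun i => Set.Ico (x i) (x i + (R : ℤ))) ∧
        (ρ - ε) * (R : ℝ) ^ d ≤ (F.card : ℝ))
    (Ω : Set (Fin d → ℤ)) (hΩsym : Ω = -Ω)
    (hΛΩ : Ω ∩ (Λ - Λ) ⊆ {0})
    (f : (Fin d → ℤ) → ℂ) (hf_pd : IsPosDefFn f)
    (hf_fin : (Function.support f).Finite) (hf_supp : Function.support f ⊆ Ω) :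
    (∑ᶠ x, f x).re ≤ (1 / ρ) * (f 0).re := by
  classical
  set g : (Fin d → ℤ) → ℝ := fun x => (f x).re with hgdef
  have hg0 : 0 ≤ g 0 := (pd_zero hf_pd).1
  have hgeven : ∀ x, g (-x) = g x := fun x => pd_even hf_pd x
  set S : Finset (Fin d → ℤ) := hf_fin.toFinset with hSdef
  have hSf : ∀ z, z ∉ S → g z = 0 := by
    intro z hz
    have hz2 : f z = 0 := by
      by_contra hne
      exact hz (hf_fin.mem_toFinset.mpr hne)
    simp [hgdef, hz2]
  set T : ℝ := ∑ z ∈ S, g z with hTdef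
  set Gs : ℝ := ∑ z ∈ S, |g z| with hGsdef
  have hGs0 : 0 ≤ Gs := Finset.sum_nonneg fun _ _ => abs_nonneg _
  have hgoal : (∑ᶠ x, f x).re = T := by
    rw [finsum_eq_sum f hf_fin, Complex.re_sum]
  rw [hgoal]
  show T ≤ 1 / ρ * g 0
  by_contra hcon
  push_neg at hcon
  set κ : ℝ := T - 1 / ρ * g 0 with hκdef
  have hκpos : 0 < κ := sub_pos.mpr hcon
  have hT0 : 0 < T := by
    have : (0:ℝ) ≤ 1 / ρ * g 0 := by positivity
    linarith
  -- choose ε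
  set ε : ℝ := min (ρ/2) (κ * ρ^2 / (8 * (g 0 + 1))) with hεdef
  have hεpos : 0 < ε := by
    apply lt_min (by linarith)
    have : 0 < g 0 + 1 := by linarith
    positivity
  have hερ : ε < ρ := lt_of_le_of_lt (min_le_left _ _) (by linarith)
  have hρε : 0 < ρ - ε := by linarith
  have hεbound : g 0 / (ρ - ε) ≤ 1 / ρ * g 0 + κ / 2 := by
    have h0 : ε ≤ ρ / 2 := by rw [hεdef]; exact min_le_left _ _
    have h1 : ρ / 2 ≤ ρ - ε := by linarith
    have h2 : ε ≤ κ * ρ^2 / (8 * (g 0 + 1)) := by rw [hεdef]; exact min_le_right _ _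
    have hg1 : 0 < g 0 + 1 := by linarith
    rw [div_le_iff₀ hρε]
    have key : g 0 * ε ≤ κ / 2 * (ρ * (ρ - ε)) := by
      have e1 : g 0 * ε ≤ g 0 * (κ * ρ^2 / (8 * (g 0 + 1))) :=
        mul_le_mul_of_nonneg_left h2 hg0
      have e2 : g 0 * (κ * ρ^2 / (8 * (g 0 + 1))) ≤ κ * ρ^2 / 8 := by
        rw [mul_div_assoc', div_le_div_iff₀ (by positivity) (by norm_num)]
        nlinarith
      have e3 : κ * ρ^2 / 8 ≤ κ / 2 * (ρ * (ρ - ε)) := by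
        have : ρ * (ρ/2) ≤ ρ * (ρ - ε) := by nlinarith
        nlinarith
      linarith
    have expand : (1 / ρ * g 0 + κ / 2) * (ρ - ε) = g 0 - g 0 * ε / ρ + κ/2 * (ρ - ε) := by
      field_simp
    have key2 : g 0 * ε / ρ ≤ κ / 2 * (ρ - ε) := by
      rw [div_le_iff₀ hρ]; nlinarith [key]
    rw [expand]; linarith
  -- the support radius L
  set L : ℕ := S.sup (fun z => Finset.univ.sup fun i => (z i).natAbs) with hLdef
  have hLbound : ∀ z ∈ S, ∀ i, (z i).natAbs ≤ L := by
    intro z hz i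
    refine le_trans ?_ (Finset.le_sup (f := fun z => Finset.univ.sup fun i => (z i).natAbs) hz)
    exact Finset.le_sup (f := fun i => (z i).natAbs) (Finset.mem_univ i)
  -- choose R₀ via a limit argument
  have htend : Tendsto (fun n : ℕ => Gs * ((1 + 2*(L:ℝ)/n)^d - 1)) atTop (𝓝 0) := by
    have hinv : Tendsto (fun n : ℕ => ((n:ℝ))⁻¹) atTop (𝓝 0) :=
      tendsto_natCast_atTop_atTop.inv_tendsto_atTop
    have h1 : Tendsto (fun n : ℕ => 2*(L:ℝ)/n) atTop (𝓝 0) := by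
      simpa [div_eq_mul_inv] using hinv.const_mul (2*(L:ℝ))
    have h2 : Tendsto (fun n : ℕ => ((1 + 2*(L:ℝ)/n)^d - 1)) atTop (𝓝 0) := by
      have := (((tendsto_const_nhds (x := (1:ℝ))).add h1).pow d).sub (tendsto_const_nhds (x := (1:ℝ)))
      simpa using this
    simpa using h2.const_mul Gs
  obtain ⟨R₁, hR₁⟩ : ∃ R₁ : ℕ, ∀ n ≥ R₁, Gs * ((1 + 2*(L:ℝ)/n)^d - 1) < κ/2 := by
    have := (htend.eventually_lt_const (by linarith : (0:ℝ) < κ/2))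
    exact eventually_atTop.mp this
  obtain ⟨R, hRge, x₀, F, hFsub, hFcard⟩ := hdens ε hεpos hερ (max R₁ 1)
  have hR1 : 1 ≤ R := le_trans (le_max_right _ _) hRge
  have hRpos : (0:ℝ) < (R:ℝ) := by exact_mod_cast Nat.lt_of_lt_of_le Nat.zero_lt_one hR1
  have hRd : (0:ℝ) < (R:ℝ)^d := pow_pos hRpos d
  have hFΛ : ∀ x ∈ F, x ∈ Λ := fun x hx => (hFsub hx).1
  have hFco : ∀ x ∈ F, ∀ i, x₀ i ≤ x i ∧ x i < x₀ i + R := by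
    intro x hx i
    have h := (hFsub hx).2
    rw [Set.mem_pi] at h
    exact h i (Set.mem_univ i)
  have hNpos : (0:ℝ) < (F.card : ℝ) := by
    have : (0:ℝ) < (ρ - ε) * (R:ℝ)^d := mul_pos hρε hRd
    linarith
  -- the cubes
  set Q : Finset (Fin d → ℤ) :=
    Fintype.piFinset (fun i => Finset.Ico (x₀ i - L) (x₀ i + R + L)) with hQdef
  set Q₀ : Finset (Fin d → ℤ) :=
    Fintype.piFinset (fun i => Finset.Ico (x₀ i) (x₀ i + R)) with hQ₀def
  have hQcard : Q.card = (R + 2*L)^d := by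
    rw [hQdef, Fintype.card_piFinset]
    have : ∀ i : Fin d, (Finset.Ico (x₀ i - L) (x₀ i + R + L)).card = R + 2*L := by
      intro i
      rw [Int.card_Ico]
      have e : (x₀ i + R + L - (x₀ i - L)) = ((R + 2*L : ℕ) : ℤ) := by push_cast; ring
      rw [e, Int.toNat_natCast]
    simp [this, Finset.prod_const]
  have hQ₀card : Q₀.card = R^d := by
    rw [hQ₀def, Fintype.card_piFinset]
    have : ∀ i : Fin d, (Finset.Ico (x₀ i) (x₀ i + (R:ℤ))).card = R := by
      intro i
      rw [Int.card_Ico]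
      have e : (x₀ i + R - x₀ i) = ((R : ℕ) : ℤ) := by push_cast; ring
      rw [e, Int.toNat_natCast]
    simp [this, Finset.prod_const]
  have hQ₀Q : Q₀ ⊆ Q := by
    intro x hx
    rw [hQ₀def, Fintype.mem_piFinset] at hx
    rw [hQdef, Fintype.mem_piFinset]
    intro i
    have := hx i
    rw [Finset.mem_Ico] at this ⊢
    have hL0 : (0:ℤ) ≤ (L:ℤ) := Int.natCast_nonneg L
    exact ⟨by linarith [this.1], by linarith [this.2]⟩
  have hFQ₀ : F ⊆ Q₀ := by
    intro x hx
    rw [hQ₀def, Fintype.mem_piFinset]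
    intro i
    rw [Finset.mem_Ico]
    exact hFco x hx i
  have hFQ : F ⊆ Q := subset_trans hFQ₀ hQ₀Q
  -- inner sums
  have himage : ∀ x : Fin d → ℤ, ∑ y ∈ Q, g (x - y) = ∑ z ∈ Q.image (fun y => x - y), g z := by
    intro x
    rw [Finset.sum_image]
    intro y₁ _ y₂ _ h
    exact sub_right_injective h
  have hinner : ∀ x : Fin d → ℤ, (∀ i, x₀ i ≤ x i ∧ x i < x₀ i + R) →
      ∑ y ∈ Q, g (x - y) = T := by
    intro x hx
    rw [himage x]
    refine (Finset.sum_subset ?_ ?_).symm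
    · intro z hz
      rw [Finset.mem_image]
      refine ⟨x - z, ?_, by rw [sub_sub_cancel]⟩
      rw [hQdef, Fintype.mem_piFinset]
      intro i
      have hzi : |z i| ≤ (L:ℤ) := by
        rw [Int.abs_eq_natAbs]
        exact_mod_cast hLbound z hz i
      rw [abs_le] at hzi
      rw [Finset.mem_Ico]
      simp only [Pi.sub_apply]
      have hxi := hx i
      constructor
      · have : x i - z i ≥ x₀ i - L := by linarith [hzi.2, hxi.1]
        linarith
      · have : x i - z i < x₀ i + R + L := by linarith [hzi.1, hxi.2]
        linarith
    · intro z _ hz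
      exact hSf z hz
  have hinnerle : ∀ x : Fin d → ℤ, ∑ y ∈ Q, g (x - y) ≤ Gs := by
    intro x
    rw [himage x]
    have h1 : ∑ z ∈ Q.image (fun y => x - y), g z
        = ∑ z ∈ Q.image (fun y => x - y) ∩ S, g z := by
      refine (Finset.sum_subset Finset.inter_subset_left ?_).symm
      intro z hz hz2
      refine hSf z fun hzS => hz2 (Finset.mem_inter.mpr ⟨hz, hzS⟩)
    rw [h1]
    calc ∑ z ∈ Q.image (fun y => x - y) ∩ S, g z
        ≤ ∑ z ∈ Q.image (fun y => x - y) ∩ S, |g z| :=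
          Finset.sum_le_sum fun z _ => le_abs_self _
      _ ≤ ∑ z ∈ S, |g z| :=
          Finset.sum_le_sum_of_subset_of_nonneg Finset.inter_subset_right
            (fun z _ _ => abs_nonneg _)
      _ = Gs := rfl
  -- the three structured sums
  have hA : ∑ x ∈ F, ∑ y ∈ F, g (x - y) = (F.card : ℝ) * g 0 := by
    have hrow : ∀ x ∈ F, ∑ y ∈ F, g (x - y) = g 0 := by
      intro x hx
      rw [Finset.sum_eq_single_of_mem x hx, sub_self]
      intro y hy hne
      have hfz : f (x - y) = 0 := by
        by_contra hne2
        have hmem : x - y ∈ Ω := hf_supp hne2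
        have hmem2 : x - y ∈ Λ - Λ := Set.sub_mem_sub (hFΛ x hx) (hFΛ y hy)
        have h0 := hΛΩ ⟨hmem, hmem2⟩
        rw [Set.mem_singleton_iff, sub_eq_zero] at h0
        exact hne h0.symm
      simp [hgdef, hfz]
    rw [Finset.sum_congr rfl hrow, Finset.sum_const, nsmul_eq_mul]
  have hB : ∑ x ∈ F, ∑ y ∈ Q, g (x - y) = (F.card : ℝ) * T := by
    rw [Finset.sum_congr rfl (fun x hx => hinner x (hFco x hx)), Finset.sum_const, nsmul_eq_mul]
  have hB' : ∑ y ∈ F, ∑ x ∈ Q, g (x - y) = (F.card : ℝ) * T := by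
    have hrow : ∀ y ∈ F, ∑ x ∈ Q, g (x - y) = T := by
      intro y hy
      have : ∀ x ∈ Q, g (x - y) = g (y - x) := by
        intro x _
        rw [← neg_sub y x, hgeven]
      rw [Finset.sum_congr rfl this]
      exact hinner y (hFco y hy)
    rw [Finset.sum_congr rfl hrow, Finset.sum_const, nsmul_eq_mul]
  set Δ : ℝ := (((R + 2*L : ℕ)):ℝ)^d - (R:ℝ)^d with hΔdef
  have hΔ0 : 0 ≤ Δ := by
    rw [hΔdef]
    have : (R:ℝ) ≤ ((R + 2*L : ℕ):ℝ) := by push_cast; linarith [Nat.cast_nonneg (α := ℝ) L]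
    have := pow_le_pow_left₀ (le_of_lt hRpos) this d
    linarith
  have hC : ∑ x ∈ Q, ∑ y ∈ Q, g (x - y) ≤ (R:ℝ)^d * T + Δ * Gs := by
    have hsd := Finset.sum_sdiff (f := fun x => ∑ y ∈ Q, g (x - y)) hQ₀Q
    have hQ0sum : ∑ x ∈ Q₀, ∑ y ∈ Q, g (x - y) = (R:ℝ)^d * T := by
      have hrow : ∀ x ∈ Q₀, ∑ y ∈ Q, g (x - y) = T := by
        intro x hx
        refine hinner x ?_
        intro i
        rw [hQ₀def, Fintype.mem_piFinset] at hx
        have := hx i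
        rw [Finset.mem_Ico] at this
        exact this
      rw [Finset.sum_congr rfl hrow, Finset.sum_const, nsmul_eq_mul, hQ₀card]
      push_cast
      ring
    have hbd : ∑ x ∈ Q \ Q₀, ∑ y ∈ Q, g (x - y) ≤ ((Q \ Q₀).card : ℝ) * Gs := by
      have := Finset.sum_le_card_nsmul (Q \ Q₀) (fun x => ∑ y ∈ Q, g (x - y)) Gs
        (fun x _ => hinnerle x)
      simpa [nsmul_eq_mul] using this
    have hcards : ((Q \ Q₀).card : ℝ) = Δ := by
      rw [Finset.card_sdiff_of_subset hQ₀Q, Nat.cast_sub (Finset.card_le_card hQ₀Q), hQcard, hQ₀card,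
        hΔdef]
      push_cast
      ring
    rw [hcards] at hbd
    have hGsΔ : 0 ≤ Δ * Gs := mul_nonneg hΔ0 hGs0
    calc ∑ x ∈ Q, ∑ y ∈ Q, g (x - y)
        = (∑ x ∈ Q \ Q₀, ∑ y ∈ Q, g (x - y)) + ∑ x ∈ Q₀, ∑ y ∈ Q, g (x - y) := hsd.symm
      _ ≤ Δ * Gs + (R:ℝ)^d * T := by rw [hQ0sum]; linarith
      _ = (R:ℝ)^d * T + Δ * Gs := by ring
  -- positive definiteness with the test weights
  set t : ℝ := (F.card : ℝ) / (R:ℝ)^d with htdef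
  have htpos : 0 < t := div_pos hNpos hRd
  set c : (Fin d → ℤ) → ℝ := fun z => (if z ∈ F then (1:ℝ) else 0) - t with hcdef
  have hP : (0:ℝ) ≤ ∑ x ∈ Q, ∑ y ∈ Q, c x * c y * g (x - y) := pd_finset hf_pd Q c
  have hIND : ∀ h : (Fin d → ℤ) → ℝ,
      ∑ x ∈ Q, (if x ∈ F then h x else 0) = ∑ x ∈ F, h x := by
    intro h
    rw [Finset.sum_ite_mem, Finset.inter_eq_right.mpr hFQ]
  have hpt : ∀ x y : Fin d → ℤ, c x * c y * g (x - y) =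
      ((if x ∈ F then (if y ∈ F then g (x - y) else 0) else 0)
        - t * (if x ∈ F then g (x - y) else 0))
        - t * (if y ∈ F then g (x - y) else 0)
        + t * t * g (x - y) := by
    intro x y
    rw [hcdef]
    by_cases hx : x ∈ F <;> by_cases hy : y ∈ F <;> simp [hx, hy] <;> ring
  have hsplit : ∑ x ∈ Q, ∑ y ∈ Q, c x * c y * g (x - y)
      = ((∑ x ∈ F, ∑ y ∈ F, g (x - y))
        - t * (∑ x ∈ F, ∑ y ∈ Q, g (x - y)))
        - t * (∑ y ∈ F, ∑ x ∈ Q, g (x - y))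
        + t * t * (∑ x ∈ Q, ∑ y ∈ Q, g (x - y)) := by
    have e1 : ∑ x ∈ Q, ∑ y ∈ Q, c x * c y * g (x - y)
        = ∑ x ∈ Q, ∑ y ∈ Q,
            (((if x ∈ F then (if y ∈ F then g (x - y) else 0) else 0)
              - t * (if x ∈ F then g (x - y) else 0))
              - t * (if y ∈ F then g (x - y) else 0)
              + t * t * g (x - y)) :=
      Finset.sum_congr rfl fun x _ => Finset.sum_congr rfl fun y _ => hpt x y
    rw [e1]
    rw [show (∑ x ∈ Q, ∑ y ∈ Q,
            (((if x ∈ F then (if y ∈ F then g (x - y) else 0) else 0)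
              - t * (if x ∈ F then g (x - y) else 0))
              - t * (if y ∈ F then g (x - y) else 0)
              + t * t * g (x - y)))
        = ((∑ x ∈ Q, ∑ y ∈ Q, (if x ∈ F then (if y ∈ F then g (x - y) else 0) else 0))
          - t * (∑ x ∈ Q, ∑ y ∈ Q, (if x ∈ F then g (x - y) else 0)))
          - t * (∑ x ∈ Q, ∑ y ∈ Q, (if y ∈ F then g (x - y) else 0))
          + t * t * (∑ x ∈ Q, ∑ y ∈ Q, g (x - y)) from by
      simp [Finset.sum_add_distrib, Finset.sum_sub_distrib, Finset.mul_sum]]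
    have eA : (∑ x ∈ Q, ∑ y ∈ Q, (if x ∈ F then (if y ∈ F then g (x - y) else 0) else 0))
        = ∑ x ∈ F, ∑ y ∈ F, g (x - y) := by
      have step : ∀ x ∈ Q, (∑ y ∈ Q, (if x ∈ F then (if y ∈ F then g (x - y) else 0) else 0))
          = (if x ∈ F then (∑ y ∈ Q, (if y ∈ F then g (x - y) else 0)) else 0) := by
        intro x _
        split <;> simp
      rw [Finset.sum_congr rfl step,
        hIND (fun x => ∑ y ∈ Q, (if y ∈ F then g (x - y) else 0))]
      exact Finset.sum_congr rfl fun x _ => hIND (fun y => g (x - y))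
    have eB : (∑ x ∈ Q, ∑ y ∈ Q, (if x ∈ F then g (x - y) else 0))
        = ∑ x ∈ F, ∑ y ∈ Q, g (x - y) := by
      have step : ∀ x ∈ Q, (∑ y ∈ Q, (if x ∈ F then g (x - y) else 0))
          = (if x ∈ F then (∑ y ∈ Q, g (x - y)) else 0) := by
        intro x _
        split <;> simp
      rw [Finset.sum_congr rfl step, hIND (fun x => ∑ y ∈ Q, g (x - y))]
    have eC : (∑ x ∈ Q, ∑ y ∈ Q, (if y ∈ F then g (x - y) else 0))
        = ∑ y ∈ F, ∑ x ∈ Q, g (x - y) := by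
      rw [Finset.sum_congr rfl fun x (_ : x ∈ Q) => hIND (fun y => g (x - y))]
      exact Finset.sum_comm
    rw [eA, eB, eC]
  rw [hsplit, hA, hB, hB'] at hP
  -- combine everything
  have htt : (0:ℝ) ≤ t * t := le_of_lt (mul_pos htpos htpos)
  have hfin1 : (0:ℝ) ≤ (F.card:ℝ) * g 0 - 2 * (t * ((F.card:ℝ) * T))
      + t * t * ((R:ℝ)^d * T + Δ * Gs) := by
    have := mul_le_mul_of_nonneg_left hC htt
    linarith
  have hts : t * (R:ℝ)^d = (F.card:ℝ) := by
    rw [htdef]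
    exact div_mul_cancel₀ _ (ne_of_gt hRd)
  have key3 : t * (F.card:ℝ) * T ≤ (F.card:ℝ) * g 0 + t * t * (Δ * Gs) := by
    have e : t * t * ((R:ℝ)^d * T) = t * (F.card:ℝ) * T := by
      calc t * t * ((R:ℝ)^d * T) = t * (t * (R:ℝ)^d) * T := by ring
        _ = t * (F.card:ℝ) * T := by rw [hts]
    nlinarith [hfin1, e]
  have h4 : T ≤ (R:ℝ)^d / (F.card:ℝ) * g 0 + Δ * Gs / (R:ℝ)^d := by
    have hpos : 0 < (F.card:ℝ) * (F.card:ℝ) / (R:ℝ)^d := div_pos (mul_pos hNpos hNpos) hRd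
    have hiq : (F.card:ℝ) * (F.card:ℝ) / (R:ℝ)^d * T
        ≤ (F.card:ℝ) * (F.card:ℝ) / (R:ℝ)^d * ((R:ℝ)^d / (F.card:ℝ) * g 0 + Δ * Gs / (R:ℝ)^d) := by
      calc (F.card:ℝ) * (F.card:ℝ) / (R:ℝ)^d * T = t * (F.card:ℝ) * T := by
            rw [htdef]; ring
        _ ≤ (F.card:ℝ) * g 0 + t * t * (Δ * Gs) := key3
        _ = (F.card:ℝ) * (F.card:ℝ) / (R:ℝ)^d * ((R:ℝ)^d / (F.card:ℝ) * g 0 + Δ * Gs / (R:ℝ)^d) := by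
            rw [htdef]
            generalize (F.card:ℝ) = N at hNpos ⊢
            have hN0 : N ≠ 0 := ne_of_gt hNpos
            have hR0 : (R:ℝ)^d ≠ 0 := ne_of_gt hRd
            field_simp
    exact le_of_mul_le_mul_left hiq hpos
  have h6 : (R:ℝ)^d / (F.card:ℝ) ≤ 1 / (ρ - ε) := by
    rw [div_le_div_iff₀ hNpos hρε]
    nlinarith [hFcard]
  have h7 : (R:ℝ)^d / (F.card:ℝ) * g 0 ≤ g 0 / (ρ - ε) := by
    have := mul_le_mul_of_nonneg_right h6 hg0
    calc (R:ℝ)^d / (F.card:ℝ) * g 0 ≤ 1 / (ρ - ε) * g 0 := this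
      _ = g 0 / (ρ - ε) := by ring
  have h8 : Δ * Gs / (R:ℝ)^d < κ / 2 := by
    have hRR₁ : R₁ ≤ R := le_trans (le_max_left _ _) hRge
    have := hR₁ R hRR₁
    have heq : Gs * ((1 + 2*(L:ℝ)/R)^d - 1) = Δ * Gs / (R:ℝ)^d := by
      have hRne : (R:ℝ) ≠ 0 := ne_of_gt hRpos
      have h9 : (1 + 2*(L:ℝ)/R) = ((R:ℝ) + 2*L)/R := by field_simp
      rw [h9, div_pow, hΔdef]
      push_cast
      field_simp
    rw [← heq]
    exact this
  linarith [h4, h7, h8, hεbound, hκpos]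
end

section
/- Let G be a finite abelian group, let H ⊆ G be nonempty, let T be a set of characters of G that is a spectrum of H, and let Ω ⊆ H − H. Then every positive definite function f : G → ℂ with f(x) = 0 for all x ∉ Ω satisfies Re(∑_{x ∈ G} f(x)) ≤ #H · f(0). -/
open Complex
open scoped ComplexOrder Pointwise BigOperators

section Aux

variable {G : Type*} [AddCommGroup G]

lemma conj_mul_self_of_norm_one {z : ℂ} (h : ‖z‖ = 1) : (starRingEnd ℂ) z * z = 1 := by
  rw [mul_comm, Complex.mul_conj, Complex.normSq_eq_norm_sq, h]
  norm_num

lemma char_sub (t : AddChar G ℂ) (ht : ∀ x, ‖t x‖ = 1) (a b : G) :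
    t (a - b) = t a * (starRingEnd ℂ) (t b) := by
  have h1 : t (a - b) * t b = t a := by
    rw [← AddChar.map_add_eq_mul, sub_add_cancel]
  have h2 : t b * (starRingEnd ℂ) (t b) = 1 := by
    rw [mul_comm]; exact conj_mul_self_of_norm_one (ht b)
  calc t (a - b) = t (a - b) * (t b * (starRingEnd ℂ) (t b)) := by rw [h2, mul_one]
    _ = (t (a - b) * t b) * (starRingEnd ℂ) (t b) := by ring
    _ = t a * (starRingEnd ℂ) (t b) := by rw [h1]

lemma conj_char_mul (t : AddChar G ℂ) (ht : ∀ x, ‖t x‖ = 1) (a b : G) :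
    (starRingEnd ℂ) (t a) * t b = (starRingEnd ℂ) (t (a - b)) := by
  rw [char_sub t ht a b, map_mul, Complex.conj_conj]

end Aux

theorem turan_bound_from_spectrum
    {G : Type*} [AddCommGroup G] [Fintype G] [DecidableEq G]
    (H : Finset G) (hH : H.Nonempty)
    (T : Finset (AddChar G ℂ))
    (hT_unit : ∀ t ∈ T, ∀ x : G, ‖t x‖ = 1)
    (hT_card : T.card = H.card)
    (hT_orth : ∀ s ∈ T, ∀ t ∈ T, s ≠ t →
      ∑ x ∈ H, s x * (starRingEnd ℂ) (t x) = 0)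
    (Ω : Set G) (hΩ : Ω ⊆ (H : Set G) - (H : Set G))
    (f : G → ℂ) (hf_pd : IsPosDefFn f)
    (hf_supp : ∀ x : G, x ∉ Ω → f x = 0) :
    (∑ x : G, f x).re ≤ (H.card : ℝ) * (f 0).re := by
  classical
  have hn0 : 0 < H.card := Finset.card_pos.mpr hH
  have hnC : (H.card : ℂ) ≠ 0 := by exact_mod_cast hn0.ne'
  have hTne : T.Nonempty := Finset.card_pos.mp (hT_card ▸ hn0)
  obtain ⟨t₀, ht₀⟩ := hTne
  -- column orthogonality
  have hcardTH : Fintype.card ↥T = Fintype.card ↥H := by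
    simp [Fintype.card_coe, hT_card]
  set e : ↥T ≃ ↥H := Fintype.equivOfCardEq hcardTH with he
  set B : Matrix ↥H ↥H ℂ :=
    Matrix.of (fun a b => ((e.symm a : AddChar G ℂ) (b : G))) with hB
  have hBBh : B * B.conjTranspose = (H.card : ℂ) • 1 := by
    ext a b
    simp only [Matrix.mul_apply, Matrix.conjTranspose_apply, Matrix.smul_apply,
      Matrix.one_apply, hB, Matrix.of_apply, Complex.star_def, smul_eq_mul]
    by_cases hab : a = b
    · subst hab
      rw [if_pos rfl, mul_one]
      have : ∀ c : ↥H, ((e.symm a : AddChar G ℂ) (c : G)) *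
          (starRingEnd ℂ) ((e.symm a : AddChar G ℂ) (c : G)) = 1 := by
        intro c
        rw [mul_comm]
        exact conj_mul_self_of_norm_one
          (hT_unit _ (Finset.coe_mem (e.symm a)) (c : G))
      rw [Finset.sum_congr rfl (fun c _ => this c)]
      simp [Fintype.card_coe]
    · rw [if_neg hab, mul_zero]
      have hne : (e.symm a : AddChar G ℂ) ≠ (e.symm b : AddChar G ℂ) :=
        fun hcontr => hab (e.symm.injective (Subtype.ext hcontr))
      have := hT_orth _ (Finset.coe_mem (e.symm a)) _ (Finset.coe_mem (e.symm b)) hne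
      rw [← this, ← Finset.sum_coe_sort H]
  have h1 : B * ((H.card : ℂ)⁻¹ • B.conjTranspose) = 1 := by
    rw [Matrix.mul_smul, hBBh, smul_smul, inv_mul_cancel₀ hnC, one_smul]
  have h2 : ((H.card : ℂ)⁻¹ • B.conjTranspose) * B = 1 := mul_eq_one_comm.mp h1
  have hBhB : B.conjTranspose * B = (H.card : ℂ) • 1 := by
    calc B.conjTranspose * B
        = (H.card : ℂ) • (((H.card : ℂ)⁻¹ • B.conjTranspose) * B) := by
          rw [Matrix.smul_mul, smul_smul, mul_inv_cancel₀ hnC, one_smul]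
      _ = (H.card : ℂ) • 1 := by rw [h2]
  have col : ∀ a ∈ H, ∀ b ∈ H,
      ∑ t ∈ T, (starRingEnd ℂ) (t a) * t b = if a = b then (H.card : ℂ) else 0 := by
    intro a ha b hb
    have := congrFun (congrFun hBhB ⟨a, ha⟩) ⟨b, hb⟩
    simp only [Matrix.mul_apply, Matrix.conjTranspose_apply, Matrix.smul_apply,
      Matrix.one_apply, hB, Matrix.of_apply, Complex.star_def, smul_eq_mul] at this
    have hre : (∑ c : ↥H, (starRingEnd ℂ) ((e.symm c : AddChar G ℂ) a) *
        ((e.symm c : AddChar G ℂ) b)) =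
        ∑ t : ↥T, (starRingEnd ℂ) ((t : AddChar G ℂ) a) * ((t : AddChar G ℂ) b) := by
      rw [← Equiv.sum_comp e
        (fun c => (starRingEnd ℂ) ((e.symm c : AddChar G ℂ) a) * ((e.symm c : AddChar G ℂ) b))]
      simp
    rw [hre] at this
    rw [← Finset.sum_coe_sort T, this]
    by_cases hab : a = b
    · subst hab; simp
    · rw [if_neg hab, if_neg (fun h => hab (Subtype.ext_iff.mp h)), mul_zero]
  -- the kernel S
  set S : G → ℂ := fun x => ∑ t ∈ T, (starRingEnd ℂ) (t x) * t₀ x with hSdef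
  have hS0 : S 0 = (H.card : ℂ) := by
    have : ∀ t ∈ T, (starRingEnd ℂ) (t 0) * t₀ 0 = 1 := by
      intro t _
      simp [AddChar.map_zero_eq_one]
    rw [hSdef]
    simp only
    rw [Finset.sum_congr rfl this]
    simp [hT_card]
  have hSx : ∀ x ∈ Ω, x ≠ 0 → S x = 0 := by
    intro x hx hne
    obtain ⟨a, ha, b, hb, rfl⟩ := Set.mem_sub.mp (hΩ hx)
    have hab : a ≠ b := fun h => hne (by rw [h, sub_self])
    have : ∀ t ∈ T, (starRingEnd ℂ) (t (a - b)) * t₀ (a - b) =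
        ((starRingEnd ℂ) (t a) * t b) * (t₀ a * (starRingEnd ℂ) (t₀ b)) := by
      intro t ht
      rw [conj_char_mul t (hT_unit t ht) a b, char_sub t₀ (hT_unit t₀ ht₀) a b]
    rw [hSdef]
    simp only
    rw [Finset.sum_congr rfl this, ← Finset.sum_mul, col a ha b hb, if_neg hab, zero_mul]
  -- nonnegativity of the twisted Fourier coefficients
  have hfhat_nonneg : ∀ t ∈ T,
      (0:ℂ) ≤ ∑ x : G, f x * ((starRingEnd ℂ) (t x) * t₀ x) := by
    intro t ht
    set cc : G → ℂ := fun g => (starRingEnd ℂ) (t g) * t₀ g with hcc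
    set N := Fintype.card G with hN
    set eG : Fin N ≃ G := (Fintype.equivFin G).symm with heG
    have hq := hf_pd N (fun i => eG i) (fun i => cc (eG i))
    set F : G → ℂ := fun u => f u * ((starRingEnd ℂ) (t u) * t₀ u) with hF
    have key : ∀ g g' : G, cc g * (starRingEnd ℂ) (cc g') * f (g - g') = F (g - g') := by
      intro g g'
      rw [hF, hcc]
      simp only
      rw [← conj_char_mul t (hT_unit t ht) g g', char_sub t₀ (hT_unit t₀ ht₀) g g']
      simp only [map_mul, Complex.conj_conj]
      ring
    have h2 : (∑ i : Fin N, ∑ j : Fin N,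
        cc (eG i) * (starRingEnd ℂ) (cc (eG j)) * f (eG i - eG j)) =
        ∑ g : G, ∑ g' : G, F (g - g') := by
      rw [← Equiv.sum_comp eG (fun g => ∑ g' : G, F (g - g'))]
      refine Finset.sum_congr rfl (fun i _ => ?_)
      rw [← Equiv.sum_comp eG (fun g' => F (eG i - g'))]
      exact Finset.sum_congr rfl (fun j _ => key _ _)
    have h3 : (∑ g : G, ∑ g' : G, F (g - g')) = (N : ℂ) * ∑ u : G, F u := by
      have : ∀ g : G, (∑ g' : G, F (g - g')) = ∑ u : G, F u := by
        intro g
        exact Equiv.sum_comp (Equiv.subLeft g) F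
      rw [Finset.sum_congr rfl (fun g _ => this g), Finset.sum_const, Finset.card_univ,
        nsmul_eq_mul, hN]
    rw [h2, h3] at hq
    have hNC : (0:ℂ) ≤ ((N : ℂ))⁻¹ := by
      rw [show ((N : ℂ))⁻¹ = (((N : ℝ)⁻¹ : ℝ) : ℂ) by simp]
      exact_mod_cast inv_nonneg.mpr (Nat.cast_nonneg (α := ℝ) N)
    have hNne : (N : ℂ) ≠ 0 := by
      have : 0 < N := Fintype.card_pos
      exact_mod_cast this.ne'
    have := mul_nonneg hNC hq
    rwa [← mul_assoc, inv_mul_cancel₀ hNne, one_mul] at this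
  -- total sum of twisted coefficients
  have sum_fhat : (∑ t ∈ T, ∑ x : G, f x * ((starRingEnd ℂ) (t x) * t₀ x)) =
      (H.card : ℂ) * f 0 := by
    rw [Finset.sum_comm]
    have : ∀ x : G, (∑ t ∈ T, f x * ((starRingEnd ℂ) (t x) * t₀ x)) = f x * S x := by
      intro x
      rw [hSdef, Finset.mul_sum]
    rw [Finset.sum_congr rfl (fun x _ => this x)]
    rw [Fintype.sum_eq_single 0 (fun x hx => ?_)]
    · rw [hS0, mul_comm]
    · by_cases hxΩ : x ∈ Ω
      · rw [hSx x hxΩ hx, mul_zero]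
      · rw [hf_supp x hxΩ, zero_mul]
  have at_t0 : (∑ x : G, f x * ((starRingEnd ℂ) (t₀ x) * t₀ x)) = ∑ x : G, f x := by
    refine Finset.sum_congr rfl (fun x _ => ?_)
    rw [conj_mul_self_of_norm_one (hT_unit t₀ ht₀ x), mul_one]
  have hle : (∑ x : G, f x) ≤ (H.card : ℂ) * f 0 := by
    rw [← at_t0, ← sum_fhat]
    exact Finset.single_le_sum hfhat_nonneg ht₀
  have hre := (Complex.le_def.mp hle).1
  simpa [Complex.mul_re] using hre
end

section
/- Let G be a locally compact abelian group with Haar measure μ, let φ : G → G be a topological group automorphism (a group automorphism that is a homeomorphism), and suppose c > 0 is such that μ(φ(A)) = c · μ(A) for every measurable set A ⊆ G. Then for every 0-symmetric open set Ω ⊆ G, the Turán constants satisfy T_G(φ(Ω)) = c · T_G(Ω). (When μ(Ω) is finite and positive, c = μ(φ(Ω))/μ(Ω).) -/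
open MeasureTheory Complex
open scoped ENNReal ComplexOrder

/-- The Turán constant of a set `Ω`: the supremum in `[0,∞]` of `Re (∫ f dμ) / f 0` over
nonzero continuous positive definite functions with support a compact subset of `Ω`. -/
noncomputable def turanConst {G : Type*} [AddCommGroup G] [TopologicalSpace G]
    [MeasurableSpace G] (μ : Measure G) (Ω : Set G) : ℝ≥0∞ :=
  sSup {r : ℝ≥0∞ | ∃ f : G → ℂ, Continuous f ∧ IsPosDefFn f ∧ f ≠ 0 ∧
    IsCompact (tsupport f) ∧ tsupport f ⊆ Ω ∧
    r = ENNReal.ofReal ((∫ x, f x ∂μ).re / (f 0).re)}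

/-- Candidate set for the Turán constant. -/
def turanSet {G : Type*} [AddCommGroup G] [TopologicalSpace G]
    [MeasurableSpace G] (μ : Measure G) (Ω : Set G) : Set ℝ≥0∞ :=
  {r : ℝ≥0∞ | ∃ f : G → ℂ, Continuous f ∧ IsPosDefFn f ∧ f ≠ 0 ∧
    IsCompact (tsupport f) ∧ tsupport f ⊆ Ω ∧
    r = ENNReal.ofReal ((∫ x, f x ∂μ).re / (f 0).re)}

lemma map_measure_of_scale
    {G : Type*} [AddCommGroup G] [TopologicalSpace G] [IsTopologicalAddGroup G]
    [MeasurableSpace G] [BorelSpace G]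
    (μ : Measure G) (ψ : G ≃+ G) (hψ_symm : Continuous ψ.symm)
    (k : ℝ)
    (hscale : ∀ A : Set G, MeasurableSet A → μ (ψ '' A) = ENNReal.ofReal k * μ A) :
    μ.map ψ.symm = ENNReal.ofReal k • μ := by
  ext A hA
  rw [Measure.map_apply hψ_symm.measurable hA, Measure.smul_apply, smul_eq_mul,
    ← hscale A hA]
  congr 1
  ext x
  simp only [Set.mem_preimage, Set.mem_image]
  constructor
  · intro h; exact ⟨ψ.symm x, h, ψ.apply_symm_apply x⟩
  · rintro ⟨y, hy, rfl⟩; simpa using hy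

lemma tsupport_comp_addEquiv
    {G : Type*} [AddCommGroup G] [TopologicalSpace G]
    (ψ : G ≃+ G) (hψ : Continuous ψ) (hψ_symm : Continuous ψ.symm) (f : G → ℂ) :
    tsupport (f ∘ ψ.symm) = ψ '' tsupport f := by
  have hsupp : Function.support (f ∘ ψ.symm) = ψ '' Function.support f := by
    rw [Function.support_comp_eq_preimage]
    ext x
    simp only [Set.mem_preimage, Function.mem_support, Set.mem_image]
    constructor
    · intro h; exact ⟨ψ.symm x, h, ψ.apply_symm_apply x⟩
    · rintro ⟨y, hy, rfl⟩; simpa using hy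
  have hhomeo : (⟨ψ.toEquiv, hψ, hψ_symm⟩ : G ≃ₜ G) '' closure (Function.support f)
      = closure ((⟨ψ.toEquiv, hψ, hψ_symm⟩ : G ≃ₜ G) '' Function.support f) :=
    Homeomorph.image_closure _ _
  unfold tsupport
  rw [hsupp]
  exact hhomeo.symm

/-- Transport of Turán candidates along an automorphism. -/
lemma turanSet_subset
    {G : Type*} [AddCommGroup G] [TopologicalSpace G] [IsTopologicalAddGroup G]
    [T2Space G] [MeasurableSpace G] [BorelSpace G]
    (μ : Measure G)
    (ψ : G ≃+ G) (hψ : Continuous ψ) (hψ_symm : Continuous ψ.symm)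
    (k : ℝ) (hk : 0 < k)
    (hscale : ∀ A : Set G, MeasurableSet A → μ (ψ '' A) = ENNReal.ofReal k * μ A)
    (Ω : Set G) :
    (fun r => ENNReal.ofReal k * r) '' turanSet μ Ω ⊆ turanSet μ (ψ '' Ω) := by
  rintro _ ⟨r, ⟨f, hf_cont, hf_pd, hf_ne, hf_cpt, hf_sub, rfl⟩, rfl⟩
  have hψh := tsupport_comp_addEquiv ψ hψ hψ_symm f
  refine ⟨f ∘ ψ.symm, hf_cont.comp hψ_symm, ?_, ?_, ?_, ?_, ?_⟩
  · intro N x c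
    have := hf_pd N (fun n => ψ.symm (x n)) c
    simpa [Function.comp, map_sub] using this
  · intro h
    apply hf_ne
    funext x
    have := congrFun h (ψ x)
    simpa using this
  · rw [hψh]; exact hf_cpt.image hψ
  · rw [hψh]; exact Set.image_mono hf_sub
  · have hmap : μ.map ψ.symm = ENNReal.ofReal k • μ :=
      map_measure_of_scale μ ψ hψ_symm k hscale
    have hint : (∫ x, (f ∘ ψ.symm) x ∂μ) = k • ∫ x, f x ∂μ := by
      have h1 : ∫ x, f x ∂(μ.map ψ.symm) = ∫ x, f (ψ.symm x) ∂μ :=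
        integral_map hψ_symm.measurable.aemeasurable
          hf_cont.stronglyMeasurable.aestronglyMeasurable
      rw [hmap, integral_smul_measure, ENNReal.toReal_ofReal hk.le] at h1
      simpa [Function.comp] using h1.symm
    have hre : (∫ x, (f ∘ ψ.symm) x ∂μ).re = k * (∫ x, f x ∂μ).re := by
      rw [hint, Complex.real_smul, Complex.mul_re]
      simp
    have h0 : ((f ∘ ψ.symm) 0) = f 0 := by simp
    rw [hre, h0, mul_div_assoc, ENNReal.ofReal_mul hk.le]

theorem turanConst_automorphism
    {G : Type*} [AddCommGroup G] [TopologicalSpace G] [IsTopologicalAddGroup G]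
    [LocallyCompactSpace G] [T2Space G] [MeasurableSpace G] [BorelSpace G]
    (μ : Measure G) [μ.IsAddHaarMeasure]
    (φ : G ≃+ G) (hφ : Continuous φ) (hφ_symm : Continuous φ.symm)
    (c : ℝ) (hc : 0 < c)
    (hscale : ∀ A : Set G, MeasurableSet A → μ (φ '' A) = ENNReal.ofReal c * μ A)
    (Ω : Set G) (hΩopen : IsOpen Ω) (hΩsym : Ω = -Ω) :
    turanConst μ (φ '' Ω) = ENNReal.ofReal c * turanConst μ Ω := by
  have hc0 : ENNReal.ofReal c ≠ 0 := by
    simp [ENNReal.ofReal_eq_zero, not_le, hc]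
  have hctop : ENNReal.ofReal c ≠ ⊤ := ENNReal.ofReal_ne_top
  have hscale' : ∀ A : Set G, MeasurableSet A →
      μ (φ.symm '' A) = ENNReal.ofReal c⁻¹ * μ A := by
    intro A hA
    have hmeas : MeasurableSet (φ.symm '' A) := by
      have h : φ.symm '' A = φ ⁻¹' A := by
        ext x
        simp only [Set.mem_image, Set.mem_preimage]
        constructor
        · rintro ⟨y, hy, rfl⟩; simpa using hy
        · intro h; exact ⟨φ x, h, φ.symm_apply_apply x⟩
      rw [h]
      exact hφ.measurable hA
    have h1 := hscale (φ.symm '' A) hmeas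
    have h2 : φ '' (φ.symm '' A) = A := by
      ext x
      simp only [Set.mem_image]
      constructor
      · rintro ⟨y, ⟨z, hz, rfl⟩, rfl⟩; simpa using hz
      · intro h; exact ⟨φ.symm x, ⟨x, h, rfl⟩, φ.apply_symm_apply x⟩
    rw [h2] at h1
    rw [ENNReal.ofReal_inv_of_pos hc, h1, ← mul_assoc,
      ENNReal.inv_mul_cancel hc0 hctop, one_mul]
  have h1 := turanSet_subset μ φ hφ hφ_symm c hc hscale Ω
  have h2 := turanSet_subset μ φ.symm hφ_symm (by simpa using hφ) c⁻¹
    (inv_pos.2 hc) (by simpa using hscale') (φ '' Ω)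
  have h3 : φ.symm '' (φ '' Ω) = Ω := by
    ext x
    simp only [Set.mem_image]
    constructor
    · rintro ⟨y, ⟨z, hz, rfl⟩, rfl⟩; simpa using hz
    · intro h; exact ⟨φ x, ⟨x, h, rfl⟩, φ.symm_apply_apply x⟩
  rw [h3] at h2
  have hseteq : turanSet μ (φ '' Ω) = (fun r => ENNReal.ofReal c * r) '' turanSet μ Ω := by
    apply Set.Subset.antisymm _ h1
    intro r hr
    have hmem : ENNReal.ofReal c⁻¹ * r ∈ turanSet μ Ω := h2 ⟨r, hr, rfl⟩
    refine ⟨ENNReal.ofReal c⁻¹ * r, hmem, ?_⟩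
    show ENNReal.ofReal c * (ENNReal.ofReal c⁻¹ * r) = r
    rw [ENNReal.ofReal_inv_of_pos hc, ← mul_assoc,
      ENNReal.mul_inv_cancel hc0 hctop, one_mul]
  show sSup (turanSet μ (φ '' Ω)) = ENNReal.ofReal c * sSup (turanSet μ Ω)
  rw [hseteq, sSup_image, ← ENNReal.mul_sSup]
end

section
/- Let G be a compact abelian group with Haar measure μ_G, let K be a closed subgroup of G equipped with its own Haar measure μ_K (both normalized arbitrarily), and let Ω ⊆ G be a 0-symmetric open set. Then the Turán constants satisfy T_G(Ω) ≤ (μ_G(G)/μ_K(K)) · T_K(Ω ∩ K), where Ω ∩ K is regarded as a 0-symmetric open subset of the compact abelian group K. -/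
open MeasureTheory Complex
open scoped ENNReal ComplexOrder

set_option linter.unusedSectionVars false
set_option linter.unusedVariables false
set_option maxHeartbeats 1000000


open Set

section basics
variable {G : Type*} [AddCommGroup G] {f : G → ℂ}

lemma IsPosDefFn.zero_nonneg (hf : IsPosDefFn f) : 0 ≤ f 0 := by
  have h := hf 1 (fun _ => 0) (fun _ => 1)
  simpa using h

lemma IsPosDefFn.conj_neg (hf : IsPosDefFn f) (x : G) : f (-x) = (starRingEnd ℂ) (f x) := by
  have h0 := hf.zero_nonneg
  have h0im : (f 0).im = 0 := by
    rw [Complex.le_def] at h0; exact h0.2.symm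
  have h1 := hf 2 ![0, x] ![1, 1]
  have h2 := hf 2 ![0, x] ![1, Complex.I]
  rw [Fin.sum_univ_two] at h1 h2
  rw [Fin.sum_univ_two, Fin.sum_univ_two] at h1 h2
  simp only [Matrix.cons_val_zero, Matrix.cons_val_one, Matrix.head_cons, map_one, mul_one,
    one_mul, sub_self, zero_sub, sub_zero, Complex.conj_I] at h1 h2
  rw [Complex.le_def] at h1 h2
  have e1 : (f (-x)).im + (f x).im = 0 := by
    have := h1.2; simp [Complex.add_im, h0im] at this; linarith
  have e2 : (f x).re - (f (-x)).re = 0 := by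
    have := h2.2
    simp [Complex.add_im, Complex.mul_im, h0im, Complex.I_re, Complex.I_im,
      Complex.mul_re] at this
    linarith
  apply Complex.ext
  · simp [Complex.conj_re]; linarith
  · simp [Complex.conj_im]; linarith

lemma IsPosDefFn.re_neg (hf : IsPosDefFn f) (x : G) : (f (-x)).re = (f x).re := by
  rw [hf.conj_neg]; simp

lemma IsPosDefFn.re_zero_pos (hf : IsPosDefFn f) (hne : f ≠ 0) : 0 < (f 0).re := by
  have h0 := hf.zero_nonneg
  rw [Complex.le_def] at h0
  rcases lt_or_eq_of_le h0.1 with h | h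
  · exact h
  exfalso
  have hf0 : f 0 = 0 := by apply Complex.ext <;> simp [← h, ← h0.2]
  apply hne
  funext x
  show f x = 0
  have h2 := hf 2 ![0, x] ![1, -(starRingEnd ℂ) (f x)]
  rw [Fin.sum_univ_two, Fin.sum_univ_two, Fin.sum_univ_two] at h2
  simp only [Matrix.cons_val_zero, Matrix.cons_val_one, Matrix.head_cons, map_one, mul_one,
    one_mul, sub_self, zero_sub, sub_zero, hf0, mul_zero, map_neg, map_mul,
    Complex.conj_conj, add_zero, zero_add] at h2
  rw [hf.conj_neg x] at h2
  rw [Complex.le_def] at h2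
  have : -(f x).re * (f x).re - (f x).im * (f x).im ≥ 0 := by
    have := h2.1
    simp [Complex.add_re, Complex.mul_re, Complex.conj_re, Complex.conj_im] at this
    nlinarith [this]
  have hsq : (f x).re ^ 2 + (f x).im ^ 2 ≤ 0 := by nlinarith
  apply Complex.ext <;> simp <;> nlinarith [sq_nonneg (f x).re, sq_nonneg (f x).im]

lemma IsPosDefFn.real_sum_nonneg (hf : IsPosDefFn f) (N : ℕ) (t : Fin N → G) (d : Fin N → ℝ) :
    0 ≤ ∑ n : Fin N, ∑ m : Fin N, d n * d m * (f (t n - t m)).re := by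
  have h := hf N t (fun n => (d n : ℂ))
  rw [Complex.le_def] at h
  have := h.1
  rw [Complex.re_sum] at this
  convert this using 1
  · simp
  refine Finset.sum_congr rfl fun n _ => ?_
  rw [Complex.re_sum]
  refine Finset.sum_congr rfl fun m _ => ?_
  simp [Complex.mul_re, Complex.ofReal_re, Complex.ofReal_im]

end basics

lemma mul_le_abs_mul {c x C : ℝ} (h : |x| ≤ C) : c * x ≤ |c| * C :=
  (le_abs_self _).trans <| (abs_mul c x) ▸ by
    exact mul_le_mul_of_nonneg_left h (abs_nonneg c)

lemma nonneg_of_forall_le_eps {q M : ℝ} (hM : 0 ≤ M) (h : ∀ ε : ℝ, 0 < ε → -q ≤ ε * M) :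
    0 ≤ q := by
  by_contra hq
  push_neg at hq
  have hq' : 0 < -q := by linarith
  have h2 : (0 : ℝ) < 2 * (M + 1) := by positivity
  have h1 := h ((-q) / (2 * (M + 1))) (div_pos hq' h2)
  rw [div_mul_eq_mul_div, le_div_iff₀ h2] at h1
  nlinarith


section main
variable {G : Type*} [AddCommGroup G] [TopologicalSpace G] [IsTopologicalAddGroup G]
  [CompactSpace G] [T2Space G]

lemma unif_cont (f : G → ℝ) (hf : Continuous f) {ε : ℝ} (hε : 0 < ε) :
    ∃ U : Set G, IsOpen U ∧ (0 : G) ∈ U ∧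
      ∀ z w : G, z - w ∈ U → |f z - f w| ≤ ε := by
  have hcont : Continuous fun p : G × G => |f (p.1 + p.2) - f p.1| := by fun_prop
  have hOopen : IsOpen {p : G × G | |f (p.1 + p.2) - f p.1| < ε} :=
    isOpen_lt hcont continuous_const
  have hsub : (univ : Set G) ×ˢ ({0} : Set G) ⊆ {p : G × G | |f (p.1 + p.2) - f p.1| < ε} := by
    rintro ⟨x, y⟩ ⟨-, hy⟩
    simp only [mem_singleton_iff] at hy
    simp [hy, hε]
  obtain ⟨u, v, hu, hv, huu, hvv, huv⟩ :=
    generalized_tube_lemma isCompact_univ isCompact_singleton hOopen hsub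
  refine ⟨v, hv, hvv rfl, ?_⟩
  intro z w hzw
  have hm : (w, z - w) ∈ u ×ˢ v := ⟨huu (mem_univ _), hzw⟩
  have := huv hm
  simp only [mem_setOf_eq] at this
  have hzz : w + (z - w) = z := by abel
  rw [hzz] at this
  exact this.le

lemma shrink {U : Set G} (hU : IsOpen U) (h0 : (0 : G) ∈ U) :
    ∃ V : Set G, IsOpen V ∧ (0 : G) ∈ V ∧ ∀ x ∈ V, ∀ y ∈ V, x - y ∈ U := by
  have hc : Continuous fun p : G × G => p.1 - p.2 := continuous_sub
  have hmem : (fun p : G × G => p.1 - p.2) ⁻¹' U ∈ nhds ((0 : G), (0 : G)) :=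
    hc.continuousAt.preimage_mem_nhds (hU.mem_nhds (by simpa))
  rw [nhds_prod_eq, Filter.mem_prod_iff] at hmem
  obtain ⟨s, hs, t, ht, hst⟩ := hmem
  obtain ⟨s', hs's, hs'o, hs'0⟩ := mem_nhds_iff.mp hs
  obtain ⟨t', ht't, ht'o, ht'0⟩ := mem_nhds_iff.mp ht
  refine ⟨s' ∩ t', hs'o.inter ht'o, ⟨hs'0, ht'0⟩, ?_⟩
  intro x hx y hy
  have : (x, y) ∈ s ×ˢ t := ⟨hs's hx.1, ht't hy.2⟩
  exact hst this

variable [MeasurableSpace G] [BorelSpace G]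

lemma partition_exists (f : G → ℝ) (hf : Continuous f) {ε : ℝ} (hε : 0 < ε) :
    ∃ (N : ℕ) (t : Fin N → G) (A : Fin N → Set G),
      (∀ n, MeasurableSet (A n)) ∧ Pairwise (Function.onFun Disjoint A) ∧
      (⋃ n, A n) = univ ∧
      ∀ n m, ∀ x ∈ A n, ∀ y ∈ A m, |f (x - y) - f (t n - t m)| ≤ ε := by
  obtain ⟨U, hUo, hU0, hUp⟩ := unif_cont f hf hε
  obtain ⟨V, hVo, hV0, hVp⟩ := shrink hUo hU0
  set W : G → Set G := fun t => (fun x => x - t) ⁻¹' V with hW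
  have hWo : ∀ t, IsOpen (W t) := fun t => hVo.preimage (continuous_sub_right t)
  have hWmem : ∀ t : G, t ∈ W t := fun t => by simp [hW, hV0]
  obtain ⟨s, hs⟩ := isCompact_univ.elim_finite_subcover W hWo
    (fun x _ => mem_iUnion.mpr ⟨x, hWmem x⟩)
  set N := s.card with hN
  set t : Fin N → G := fun n => (s.equivFin.symm n : G) with ht
  set A : Fin N → Set G := fun n => W (t n) \ ⋃ (m : Fin N) (_ : m < n), W (t m) with hA
  have hAW : ∀ n, A n ⊆ W (t n) := fun n => diff_subset
  refine ⟨N, t, A, ?_, ?_, ?_, ?_⟩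
  · intro n
    exact ((hWo _).measurableSet).diff
      (MeasurableSet.iUnion fun m => MeasurableSet.iUnion fun _ => (hWo _).measurableSet)
  · intro n m hnm
    rcases hnm.lt_or_gt with h | h
    · rw [Function.onFun, Set.disjoint_left]
      intro x hxn hxm
      exact hxm.2 (mem_iUnion.mpr ⟨n, mem_iUnion.mpr ⟨h, hxn.1⟩⟩)
    · rw [Function.onFun, Set.disjoint_left]
      intro x hxn hxm
      exact hxn.2 (mem_iUnion.mpr ⟨m, mem_iUnion.mpr ⟨h, hxm.1⟩⟩)
  · apply eq_univ_of_forall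
    intro x
    have hx : x ∈ ⋃ i ∈ s, W i := hs (mem_univ x)
    rw [mem_iUnion₂] at hx
    obtain ⟨i, his, hxi⟩ := hx
    have hne : {n : Fin N | x ∈ W (t n)}.Nonempty := by
      refine ⟨s.equivFin ⟨i, his⟩, ?_⟩
      have : t (s.equivFin ⟨i, his⟩) = i := by simp [ht]
      simp [this, hxi]
    obtain ⟨n₀, hn₀, hmin⟩ := wellFounded_lt.has_min _ hne
    rw [mem_iUnion]
    refine ⟨n₀, hn₀, ?_⟩
    intro hmem
    rw [mem_iUnion] at hmem
    obtain ⟨m, hm⟩ := hmem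
    rw [mem_iUnion] at hm
    obtain ⟨hmn, hxm⟩ := hm
    exact hmin m hxm hmn
  · intro n m x hx y hy
    have h1 : x - t n ∈ V := hAW n hx
    have h2 : y - t m ∈ V := hAW m hy
    have h3 : (x - t n) - (y - t m) ∈ U := hVp _ h1 _ h2
    have h4 : (x - y) - (t n - t m) = (x - t n) - (y - t m) := by abel
    exact hUp _ _ (h4 ▸ h3)


lemma cont_integrable (g : G → ℝ) (hg : Continuous g) (σ : Measure G) [IsFiniteMeasure σ] :
    Integrable g σ :=
  hg.integrable_of_hasCompactSupport (isClosed_tsupport g).isCompact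

lemma inner_cont (f : G → ℝ) (hf : Continuous f) (σ : Measure G) [IsFiniteMeasure σ] :
    Continuous fun y => ∫ x, f (x - y) ∂σ := by
  rw [continuous_iff_continuousAt]
  intro y₀
  rw [ContinuousAt, Metric.tendsto_nhds]
  intro ε hε
  set C := (σ Set.univ).toReal with hC
  have hC0 : 0 ≤ C := ENNReal.toReal_nonneg
  have hε' : 0 < ε / (2 * (C + 1)) := by positivity
  obtain ⟨U, hUo, hU0, hUp⟩ := unif_cont f hf hε'
  have hnhds : (fun y => y₀ - y) ⁻¹' U ∈ nhds y₀ := by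
    refine (hUo.preimage (by fun_prop)).mem_nhds ?_
    simp [hU0]
  filter_upwards [hnhds] with y hy
  have hint1 : Integrable (fun x => f (x - y)) σ :=
    cont_integrable _ (hf.comp (continuous_sub_right y)) σ
  have hint2 : Integrable (fun x => f (x - y₀)) σ :=
    cont_integrable _ (hf.comp (continuous_sub_right y₀)) σ
  rw [Real.dist_eq, ← integral_sub hint1 hint2]
  have hb : ∀ᵐ x ∂σ, ‖f (x - y) - f (x - y₀)‖ ≤ ε / (2 * (C + 1)) := by
    refine Filter.Eventually.of_forall fun x => ?_
    have : (x - y) - (x - y₀) ∈ U := by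
      have h : (x - y) - (x - y₀) = y₀ - y := by abel
      rw [h]; exact hy
    simpa [Real.norm_eq_abs] using hUp _ _ this
  calc |∫ x, (f (x - y) - f (x - y₀)) ∂σ| ≤ ε / (2 * (C + 1)) * C := by
        simpa [Real.norm_eq_abs, measureReal_def, hC] using norm_integral_le_of_norm_le_const hb
    _ < ε := by
        rw [div_mul_eq_mul_div, div_lt_iff₀ (by positivity)]
        nlinarith

lemma J_close (f : G → ℝ) (hf : Continuous f) (σ τ : Measure G)
    [IsFiniteMeasure σ] [IsFiniteMeasure τ] {ε : ℝ} (hε : 0 ≤ ε)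
    {N : ℕ} {t : Fin N → G} {A : Fin N → Set G}
    (hmeas : ∀ n, MeasurableSet (A n)) (hdisj : Pairwise (Function.onFun Disjoint A))
    (hunion : (⋃ n, A n) = univ)
    (happ : ∀ n m, ∀ x ∈ A n, ∀ y ∈ A m, |f (x - y) - f (t n - t m)| ≤ ε) :
    |(∫ y, ∫ x, f (x - y) ∂σ ∂τ) -
      ∑ m : Fin N, ∑ n : Fin N, (σ (A n)).toReal * (τ (A m)).toReal * f (t n - t m)|
      ≤ ε * (σ univ).toReal * (τ univ).toReal := by
  have hfsub : ∀ y : G, Continuous fun x => f (x - y) :=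
    fun y => hf.comp (continuous_sub_right y)
  -- step 1 : outer splitting
  have step1 : (∫ y, ∫ x, f (x - y) ∂σ ∂τ) =
      ∑ m : Fin N, ∫ y in A m, (∫ x, f (x - y) ∂σ) ∂τ := by
    rw [← tsum_fintype (L := .unconditional _), ← integral_iUnion hmeas hdisj]
    · rw [hunion, Measure.restrict_univ]
    · rw [hunion]
      exact (cont_integrable _ (inner_cont f hf σ) τ).integrableOn
  -- step 2 : inner splitting
  have step2 : ∀ y : G, (∫ x, f (x - y) ∂σ) = ∑ n : Fin N, ∫ x in A n, f (x - y) ∂σ := by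
    intro y
    rw [← tsum_fintype (L := .unconditional _), ← integral_iUnion hmeas hdisj]
    · rw [hunion, Measure.restrict_univ]
    · rw [hunion]
      exact (cont_integrable _ (hfsub y) σ).integrableOn
  -- step 3 : swap inner sum with outer set integral
  have hgn_cont : ∀ n : Fin N, Continuous fun y => ∫ x in A n, f (x - y) ∂σ := fun n =>
    inner_cont f hf (σ.restrict (A n))
  have step3 : ∀ m : Fin N, (∫ y in A m, (∫ x, f (x - y) ∂σ) ∂τ) =
      ∑ n : Fin N, ∫ y in A m, (∫ x in A n, f (x - y) ∂σ) ∂τ := by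
    intro m
    rw [← integral_finset_sum]
    · exact setIntegral_congr_fun (hmeas m) fun y _ => step2 y
    · exact fun n _ => (cont_integrable _ (hgn_cont n) (τ.restrict (A m)))
  rw [step1]
  have key : ∀ n m : Fin N,
      |(∫ y in A m, (∫ x in A n, f (x - y) ∂σ) ∂τ) -
        (σ (A n)).toReal * (τ (A m)).toReal * f (t n - t m)|
        ≤ ε * ((σ (A n)).toReal * (τ (A m)).toReal) := by
    intro n m
    set c : ℝ := f (t n - t m) with hc
    have hrw : ∀ y : G, (∫ x in A n, f (x - y) ∂σ) =
        (∫ x in A n, (f (x - y) - c) ∂σ) + (σ (A n)).toReal * c := by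
      intro y
      rw [integral_sub ((cont_integrable _ (hfsub y) (σ.restrict (A n)))) (integrable_const c)]
      rw [setIntegral_const]
      simp [smul_eq_mul, measureReal_def]
    have hu_cont : Continuous fun y => ∫ x in A n, (f (x - y) - c) ∂σ := by
      have : (fun y => ∫ x in A n, (f (x - y) - c) ∂σ)
          = fun y => (∫ x in A n, f (x - y) ∂σ) - (σ (A n)).toReal * c := by
        funext y
        have := hrw y
        linarith
      rw [this]
      exact (hgn_cont n).sub continuous_const
    have hsplit : (∫ y in A m, (∫ x in A n, f (x - y) ∂σ) ∂τ)
        = (∫ y in A m, (∫ x in A n, (f (x - y) - c) ∂σ) ∂τ)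
          + (τ (A m)).toReal * ((σ (A n)).toReal * c) := by
      have e1 : (∫ y in A m, (∫ x in A n, f (x - y) ∂σ) ∂τ)
          = ∫ y in A m, ((∫ x in A n, (f (x - y) - c) ∂σ) + (σ (A n)).toReal * c) ∂τ :=
        setIntegral_congr_fun (hmeas m) fun y _ => hrw y
      rw [e1, integral_add (cont_integrable _ hu_cont (τ.restrict (A m))) (integrable_const _),
        setIntegral_const, smul_eq_mul, measureReal_def]
    rw [hsplit]
    have harr : (∫ y in A m, (∫ x in A n, (f (x - y) - c) ∂σ) ∂τ)
        + (τ (A m)).toReal * ((σ (A n)).toReal * c)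
        - (σ (A n)).toReal * (τ (A m)).toReal * c
        = ∫ y in A m, (∫ x in A n, (f (x - y) - c) ∂σ) ∂τ := by ring
    rw [harr]
    have hbound : ∀ y ∈ A m, ‖∫ x in A n, (f (x - y) - c) ∂σ‖ ≤ ε * (σ (A n)).toReal := by
      intro y hy
      have h1 : ∀ x ∈ A n, ‖f (x - y) - c‖ ≤ ε := fun x hx => by
        simpa [Real.norm_eq_abs] using happ n m x hx y hy
      have := norm_setIntegral_le_of_norm_le_const (measure_lt_top σ (A n)) h1
      simpa [mul_comm, measureReal_def] using this
    have := norm_setIntegral_le_of_norm_le_const (measure_lt_top τ (A m)) hbound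
    rw [Real.norm_eq_abs, measureReal_def] at this
    calc |∫ y in A m, (∫ x in A n, (f (x - y) - c) ∂σ) ∂τ|
        ≤ ε * (σ (A n)).toReal * (τ (A m)).toReal := this
      _ = ε * ((σ (A n)).toReal * (τ (A m)).toReal) := by ring
  -- combine
  have hsum : ∀ ι : Type, True := fun _ => trivial
  have hσsum : ∑ n : Fin N, (σ (A n)).toReal = (σ univ).toReal := by
    have h1 : σ univ = ∑ n : Fin N, σ (A n) := by
      rw [← hunion, measure_iUnion hdisj hmeas, tsum_fintype]
    rw [h1, ENNReal.toReal_sum]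
    exact fun n _ => measure_ne_top σ _
  have hτsum : ∑ m : Fin N, (τ (A m)).toReal = (τ univ).toReal := by
    have h1 : τ univ = ∑ m : Fin N, τ (A m) := by
      rw [← hunion, measure_iUnion hdisj hmeas, tsum_fintype]
    rw [h1, ENNReal.toReal_sum]
    exact fun m _ => measure_ne_top τ _
  calc |∑ m : Fin N, ∫ y in A m, (∫ x, f (x - y) ∂σ) ∂τ -
        ∑ m : Fin N, ∑ n : Fin N, (σ (A n)).toReal * (τ (A m)).toReal * f (t n - t m)|
      = |∑ m : Fin N, ∑ n : Fin N,
          ((∫ y in A m, (∫ x in A n, f (x - y) ∂σ) ∂τ) -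
            (σ (A n)).toReal * (τ (A m)).toReal * f (t n - t m))| := by
        rw [← Finset.sum_sub_distrib]
        congr 1
        refine Finset.sum_congr rfl fun m _ => ?_
        rw [step3 m, ← Finset.sum_sub_distrib]
    _ ≤ ∑ m : Fin N, ∑ n : Fin N, ε * ((σ (A n)).toReal * (τ (A m)).toReal) := by
        refine (Finset.abs_sum_le_sum_abs _ _).trans ?_
        refine Finset.sum_le_sum fun m _ => ?_
        refine (Finset.abs_sum_le_sum_abs _ _).trans ?_
        exact Finset.sum_le_sum fun n _ => key n m
    _ = ε * (σ univ).toReal * (τ univ).toReal := by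
        rw [← hσsum, ← hτsum, mul_assoc, Finset.sum_mul_sum]
        simp only [Finset.mul_sum]
        rw [Finset.sum_comm]

lemma quad_nonneg (f : G → ℝ) (hf : Continuous f)
    (hP : ∀ (N : ℕ) (t : Fin N → G) (d : Fin N → ℝ),
      0 ≤ ∑ n : Fin N, ∑ m : Fin N, d n * d m * f (t n - t m))
    (σ τ : Measure G) [IsFiniteMeasure σ] [IsFiniteMeasure τ] (a b : ℝ) :
    0 ≤ a * a * (∫ y, ∫ x, f (x - y) ∂σ ∂σ) + a * b * (∫ y, ∫ x, f (x - y) ∂σ ∂τ)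
      + a * b * (∫ y, ∫ x, f (x - y) ∂τ ∂σ) + b * b * (∫ y, ∫ x, f (x - y) ∂τ ∂τ) := by
  set Jσσ := ∫ y, ∫ x, f (x - y) ∂σ ∂σ
  set Jστ := ∫ y, ∫ x, f (x - y) ∂σ ∂τ
  set Jτσ := ∫ y, ∫ x, f (x - y) ∂τ ∂σ
  set Jττ := ∫ y, ∫ x, f (x - y) ∂τ ∂τ
  set su := (σ univ).toReal with hsu
  set tu := (τ univ).toReal with htu
  have hsu0 : 0 ≤ su := ENNReal.toReal_nonneg
  have htu0 : 0 ≤ tu := ENNReal.toReal_nonneg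
  set M : ℝ := |a * a| * (su * su) + |a * b| * (su * tu) + |a * b| * (tu * su)
      + |b * b| * (tu * tu) with hM
  have hM0 : 0 ≤ M := by positivity
  refine nonneg_of_forall_le_eps hM0 ?_
  intro ε hε
  obtain ⟨N, t, A, hmeas, hdisj, hunion, happ⟩ := partition_exists f hf hε
  set Sσσ := ∑ m : Fin N, ∑ n : Fin N, (σ (A n)).toReal * (σ (A m)).toReal * f (t n - t m)
    with hSσσ
  set Sστ := ∑ m : Fin N, ∑ n : Fin N, (σ (A n)).toReal * (τ (A m)).toReal * f (t n - t m)
    with hSστ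
  set Sτσ := ∑ m : Fin N, ∑ n : Fin N, (τ (A n)).toReal * (σ (A m)).toReal * f (t n - t m)
    with hSτσ
  set Sττ := ∑ m : Fin N, ∑ n : Fin N, (τ (A n)).toReal * (τ (A m)).toReal * f (t n - t m)
    with hSττ
  have h1 : |Jσσ - Sσσ| ≤ ε * su * su := J_close f hf σ σ hε.le hmeas hdisj hunion happ
  have h2 : |Jστ - Sστ| ≤ ε * su * tu := J_close f hf σ τ hε.le hmeas hdisj hunion happ
  have h3 : |Jτσ - Sτσ| ≤ ε * tu * su := J_close f hf τ σ hε.le hmeas hdisj hunion happ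
  have h4 : |Jττ - Sττ| ≤ ε * tu * tu := J_close f hf τ τ hε.le hmeas hdisj hunion happ
  set d : Fin N → ℝ := fun n => a * (σ (A n)).toReal + b * (τ (A n)).toReal with hd
  have hS : 0 ≤ ∑ n : Fin N, ∑ m : Fin N, d n * d m * f (t n - t m) := hP N t d
  have hdecomp : ∑ n : Fin N, ∑ m : Fin N, d n * d m * f (t n - t m)
      = a * a * Sσσ + a * b * Sστ + a * b * Sτσ + b * b * Sττ := by
    rw [Finset.sum_comm]
    rw [hSσσ, hSστ, hSτσ, hSττ]
    simp only [Finset.mul_sum, ← Finset.sum_add_distrib]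
    refine Finset.sum_congr rfl fun m _ => Finset.sum_congr rfl fun n _ => ?_
    simp only [hd]
    ring
  -- -Q ≤ S - Q ≤ ε * M
  have e1 : a * a * (Sσσ - Jσσ) ≤ |a * a| * (ε * su * su) := mul_le_abs_mul (by
    rw [abs_sub_comm]; exact h1)
  have e2 : a * b * (Sστ - Jστ) ≤ |a * b| * (ε * su * tu) := mul_le_abs_mul (by
    rw [abs_sub_comm]; exact h2)
  have e3 : a * b * (Sτσ - Jτσ) ≤ |a * b| * (ε * tu * su) := mul_le_abs_mul (by
    rw [abs_sub_comm]; exact h3)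
  have e4 : b * b * (Sττ - Jττ) ≤ |b * b| * (ε * tu * tu) := mul_le_abs_mul (by
    rw [abs_sub_comm]; exact h4)
  have hQ : -(a * a * Jσσ + a * b * Jστ + a * b * Jτσ + b * b * Jττ) ≤ ε * M := by
    have hsum : a * a * (Sσσ - Jσσ) + a * b * (Sστ - Jστ) + a * b * (Sτσ - Jτσ)
        + b * b * (Sττ - Jττ)
        ≤ |a * a| * (ε * su * su) + |a * b| * (ε * su * tu) + |a * b| * (ε * tu * su)
          + |b * b| * (ε * tu * tu) := by linarith
    have hεM : |a * a| * (ε * su * su) + |a * b| * (ε * su * tu) + |a * b| * (ε * tu * su)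
        + |b * b| * (ε * tu * tu) = ε * M := by rw [hM]; ring
    rw [hdecomp] at hS
    linarith
  exact hQ

lemma J_symm (f : G → ℝ) (hf : Continuous f) (hsymm : ∀ x : G, f (-x) = f x)
    (σ τ : Measure G) [IsFiniteMeasure σ] [IsFiniteMeasure τ] :
    (∫ y, ∫ x, f (x - y) ∂σ ∂τ) = ∫ y, ∫ x, f (x - y) ∂τ ∂σ := by
  set J1 := ∫ y, ∫ x, f (x - y) ∂σ ∂τ
  set J2 := ∫ y, ∫ x, f (x - y) ∂τ ∂σ
  set su := (σ univ).toReal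
  set tu := (τ univ).toReal
  have hsu0 : 0 ≤ su := ENNReal.toReal_nonneg
  have htu0 : 0 ≤ tu := ENNReal.toReal_nonneg
  have key : ∀ ε : ℝ, 0 < ε → |J1 - J2| ≤ ε * (su * tu + tu * su) := by
    intro ε hε
    obtain ⟨N, t, A, hmeas, hdisj, hunion, happ⟩ := partition_exists f hf hε
    set Ssum := ∑ m : Fin N, ∑ n : Fin N,
      (σ (A n)).toReal * (τ (A m)).toReal * f (t n - t m) with hSs
    have h2 : |J1 - Ssum| ≤ ε * su * tu :=
      J_close f hf σ τ hε.le hmeas hdisj hunion happ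
    have h3 : |J2 - ∑ m : Fin N, ∑ n : Fin N,
        (τ (A n)).toReal * (σ (A m)).toReal * f (t n - t m)| ≤ ε * tu * su :=
      J_close f hf τ σ hε.le hmeas hdisj hunion happ
    have heq : (∑ m : Fin N, ∑ n : Fin N,
        (τ (A n)).toReal * (σ (A m)).toReal * f (t n - t m)) = Ssum := by
      rw [hSs, Finset.sum_comm]
      refine Finset.sum_congr rfl fun m _ => Finset.sum_congr rfl fun n _ => ?_
      rw [← hsymm (t n - t m), neg_sub]
      ring
    rw [heq] at h3
    have tri : |J1 - J2| ≤ |J1 - Ssum| + |J2 - Ssum| := by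
      have h := abs_sub_le J1 Ssum J2
      rwa [abs_sub_comm Ssum J2] at h
    linarith
  have h0 : |J1 - J2| ≤ 0 := by
    have hM : (0 : ℝ) ≤ su * tu + tu * su := by positivity
    have := nonneg_of_forall_le_eps (q := -|J1 - J2|) hM
      (fun ε hε => by simpa using key ε hε)
    linarith
  have h1 : J1 - J2 = 0 := abs_eq_zero.mp (le_antisymm h0 (abs_nonneg _))
  linarith

lemma claimC (μG : Measure G) [μG.IsAddHaarMeasure]
    (K : AddSubgroup G) (hK : IsClosed (K : Set G))
    [MeasurableSpace K] [BorelSpace K]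
    (μK : Measure K) [μK.IsAddHaarMeasure]
    (fre : G → ℝ) (hfre : Continuous fre)
    (hP : ∀ (N : ℕ) (t : Fin N → G) (d : Fin N → ℝ),
      0 ≤ ∑ n : Fin N, ∑ m : Fin N, d n * d m * fre (t n - t m))
    (heven : ∀ x : G, fre (-x) = fre x) :
    (μK univ).toReal * (∫ x, fre x ∂μG) ≤
      (μG univ).toReal * (∫ k, fre (k : G) ∂μK) := by
  haveI : CompactSpace K := isCompact_iff_compactSpace.mp hK.isCompact
  have hvalc : Continuous (Subtype.val : K → G) := continuous_subtype_val
  have hvalm : Measurable (Subtype.val : K → G) := hvalc.measurable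
  set ρ : Measure G := μK.map Subtype.val with hρ
  haveI : IsFiniteMeasure ρ := Measure.isFiniteMeasure_map μK Subtype.val
  set I : ℝ := ∫ x, fre x ∂μG with hI
  set IK : ℝ := ∫ k, fre (k : G) ∂μK with hIK
  set γ : ℝ := (μG univ).toReal with hγ
  set κ : ℝ := (μK univ).toReal with hκ
  have hρuniv : ρ univ = μK univ := by
    rw [hρ, Measure.map_apply hvalm MeasurableSet.univ, preimage_univ]
  have hρκ : (ρ univ).toReal = κ := by rw [hρuniv]
  -- map integrals
  have hmap : ∀ g : G → ℝ, Continuous g → (∫ x, g x ∂ρ) = ∫ k, g (k : G) ∂μK := by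
    intro g hg
    rw [hρ, integral_map hvalm.aemeasurable hg.aestronglyMeasurable]
  -- inner integral values
  have hinnerG : ∀ y : G, (∫ x, fre (x - y) ∂μG) = I :=
    fun y => integral_sub_right_eq_self fre y
  have hinnerρ : ∀ k : K, (∫ x, fre (x - (k : G)) ∂ρ) = IK := by
    intro k
    have h1 := hmap (fun x => fre (x - (k : G))) (hfre.comp (continuous_sub_right _))
    rw [h1]
    have : ∀ k' : K, fre ((k' : G) - (k : G)) = (fun j : K => fre (j : G)) (k' - k) := by
      intro k'; simp
    rw [integral_congr_ae (Filter.Eventually.of_forall this)]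
    exact integral_sub_right_eq_self (fun j : K => fre (j : G)) k
  -- J values
  have hJσσ : (∫ y, ∫ x, fre (x - y) ∂μG ∂μG) = γ * I := by
    rw [integral_congr_ae (Filter.Eventually.of_forall hinnerG), integral_const, smul_eq_mul,
      measureReal_def]
  have hJστ : (∫ y, ∫ x, fre (x - y) ∂μG ∂ρ) = κ * I := by
    rw [integral_congr_ae (Filter.Eventually.of_forall hinnerG), integral_const, smul_eq_mul,
      measureReal_def, hρκ]
  have hJτσ : (∫ y, ∫ x, fre (x - y) ∂ρ ∂μG) = κ * I := by
    rw [J_symm fre hfre heven ρ μG]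
    exact hJστ
  have hJττ : (∫ y, ∫ x, fre (x - y) ∂ρ ∂ρ) = κ * IK := by
    have h1 := hmap (fun y => ∫ x, fre (x - y) ∂ρ) (inner_cont fre hfre ρ)
    rw [h1, integral_congr_ae (Filter.Eventually.of_forall hinnerρ), integral_const, smul_eq_mul,
      measureReal_def]
  have hquad := quad_nonneg fre hfre hP μG ρ κ (-γ)
  rw [hJσσ, hJστ, hJτσ, hJττ] at hquad
  have hγ0 : 0 < γ := by
    rw [hγ]
    refine ENNReal.toReal_pos ?_ (measure_ne_top _ _)
    exact (isOpen_univ.measure_ne_zero μG ⟨0, trivial⟩)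
  have hκ0 : 0 < κ := by
    rw [hκ]
    refine ENNReal.toReal_pos ?_ (measure_ne_top _ _)
    exact (isOpen_univ.measure_ne_zero μK ⟨0, trivial⟩)
  nlinarith [hquad, mul_pos hγ0 hκ0]

end main

lemma IsPosDefFn.comp_subgroup {G : Type*} [AddCommGroup G] {f : G → ℂ}
    (hf : IsPosDefFn f) (K : AddSubgroup G) : IsPosDefFn (fun k : K => f (k : G)) := by
  intro N x c
  have h := hf N (fun n => (x n : G)) c
  simpa using h


theorem turanConst_le_of_subgroup
    {G : Type*} [AddCommGroup G] [TopologicalSpace G] [IsTopologicalAddGroup G]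
    [CompactSpace G] [T2Space G] [MeasurableSpace G] [BorelSpace G]
    (μG : Measure G) [μG.IsAddHaarMeasure]
    (K : AddSubgroup G) (hK : IsClosed (K : Set G))
    [MeasurableSpace K] [BorelSpace K]
    (μK : Measure K) [μK.IsAddHaarMeasure]
    (Ω : Set G) (hΩopen : IsOpen Ω) (hΩsym : Ω = -Ω) :
    turanConst μG Ω ≤ (μG Set.univ / μK Set.univ) *
      turanConst μK ((Subtype.val : K → G) ⁻¹' Ω) := by
  haveI : CompactSpace K := isCompact_iff_compactSpace.mp hK.isCompact
  refine sSup_le ?_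
  rintro r ⟨f, hfc, hfpd, hfne, _, hfsub, hr⟩
  have hvalc : Continuous (Subtype.val : K → G) := continuous_subtype_val
  set g : K → ℂ := fun k => f (k : G) with hg
  have hgc : Continuous g := hfc.comp hvalc
  have hgpd : IsPosDefFn g := hfpd.comp_subgroup K
  have hf0 : 0 < (f 0).re := hfpd.re_zero_pos hfne
  have hg0 : (g 0).re = (f 0).re := by simp [hg]
  have hgne : g ≠ 0 := by
    intro h
    have : g 0 = 0 := by rw [h]; rfl
    rw [this] at hg0
    simp at hg0
    exact absurd hg0.symm (ne_of_gt hf0)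
  have hgsupp : tsupport g ⊆ (Subtype.val : K → G) ⁻¹' Ω := by
    have h1 : tsupport g ⊆ (Subtype.val : K → G) ⁻¹' (tsupport f) := by
      apply closure_minimal
      · intro k hk
        have : f (k : G) ≠ 0 := hk
        exact subset_closure this
      · exact (isClosed_tsupport f).preimage hvalc
    exact h1.trans (Set.preimage_mono hfsub)
  have hmem : ENNReal.ofReal ((∫ k, g k ∂μK).re / (g 0).re) ∈
      {r : ℝ≥0∞ | ∃ f : K → ℂ, Continuous f ∧ IsPosDefFn f ∧ f ≠ 0 ∧
        IsCompact (tsupport f) ∧ tsupport f ⊆ ((Subtype.val : K → G) ⁻¹' Ω) ∧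
        r = ENNReal.ofReal ((∫ x, f x ∂μK).re / (f 0).re)} :=
    ⟨g, hgc, hgpd, hgne, (isClosed_tsupport g).isCompact, hgsupp, rfl⟩
  have hle : ENNReal.ofReal ((∫ k, g k ∂μK).re / (g 0).re) ≤
      turanConst μK ((Subtype.val : K → G) ⁻¹' Ω) := le_sSup hmem
  -- real computation
  set fre : G → ℝ := fun x => (f x).re with hfre
  have hfrec : Continuous fre := Complex.continuous_re.comp hfc
  have hfint : Integrable f μG :=
    hfc.integrable_of_hasCompactSupport (isClosed_tsupport f).isCompact
  have hgint : Integrable g μK :=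
    hgc.integrable_of_hasCompactSupport (isClosed_tsupport g).isCompact
  have hIre : (∫ x, f x ∂μG).re = ∫ x, fre x ∂μG := (integral_re hfint).symm
  have hIKre : (∫ k, g k ∂μK).re = ∫ k, fre (k : G) ∂μK := (integral_re hgint).symm
  have hC := claimC μG K hK μK fre hfrec
    (fun N t d => hfpd.real_sum_nonneg N t d)
    (fun x => hfpd.re_neg x)
  set γ' : ℝ≥0∞ := μG Set.univ with hγ'
  set κ' : ℝ≥0∞ := μK Set.univ with hκ'
  have hγtop : γ' ≠ ⊤ := measure_ne_top _ _
  have hκtop : κ' ≠ ⊤ := measure_ne_top _ _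
  have hγ0 : γ' ≠ 0 := isOpen_univ.measure_ne_zero μG ⟨0, trivial⟩
  have hκ0 : κ' ≠ 0 := isOpen_univ.measure_ne_zero μK ⟨0, trivial⟩
  set γ : ℝ := γ'.toReal
  set κ : ℝ := κ'.toReal
  have hγpos : 0 < γ := ENNReal.toReal_pos hγ0 hγtop
  have hκpos : 0 < κ := ENNReal.toReal_pos hκ0 hκtop
  -- r ≤ (γ'/κ') * ofReal(...)
  have hreal : (∫ x, f x ∂μG).re / (f 0).re ≤
      (γ / κ) * ((∫ k, g k ∂μK).re / (g 0).re) := by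
    rw [hIre, hIKre, hg0]
    rw [div_mul_div_comm, div_le_div_iff₀ (hf0) (by positivity)]
    calc (∫ x, fre x ∂μG) * (κ * (f 0).re)
        = (κ * (∫ x, fre x ∂μG)) * (f 0).re := by ring
      _ ≤ (γ * (∫ k, fre (k : G) ∂μK)) * (f 0).re := by
          exact mul_le_mul_of_nonneg_right hC hf0.le
      _ = γ * (∫ k, fre (k : G) ∂μK) * (f 0).re := by ring
  have hr2 : r ≤ (γ' / κ') * ENNReal.ofReal ((∫ k, g k ∂μK).re / (g 0).re) := by
    rw [hr]
    calc ENNReal.ofReal ((∫ x, f x ∂μG).re / (f 0).re)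
        ≤ ENNReal.ofReal ((γ / κ) * ((∫ k, g k ∂μK).re / (g 0).re)) :=
          ENNReal.ofReal_le_ofReal hreal
      _ = ENNReal.ofReal (γ / κ) * ENNReal.ofReal ((∫ k, g k ∂μK).re / (g 0).re) :=
          ENNReal.ofReal_mul (by positivity)
      _ = (γ' / κ') * ENNReal.ofReal ((∫ k, g k ∂μK).re / (g 0).re) := by
          congr 1
          rw [ENNReal.ofReal_div_of_pos hκpos, ENNReal.ofReal_toReal hγtop,
            ENNReal.ofReal_toReal hκtop]
  exact hr2.trans (mul_le_mul_right hle _)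
end

section
/- Suppose 0 < b < a ≤ 2b and let Ω = (−a, −b) ∪ (−b, b) ∪ (b, a) ⊆ ℝ (that is, the interval (−a, a) with the two points ±b removed). Then the Turán constant satisfies T_ℝ(Ω) = b; that is, the supremum of Re(∫_ℝ f(x) dx)/f(0) over all nonzero continuous positive definite functions f : ℝ → ℂ whose support is a compact subset of Ω equals b (the same value as for the interval (−b, b)). -/
open MeasureTheory Complex
open scoped ENNReal ComplexOrder

lemma posdef_zero_le {G : Type*} [AddCommGroup G] {f : G → ℂ} (hf : IsPosDefFn f) :
    0 ≤ f 0 := by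
  have h := hf 1 (fun _ => 0) (fun _ => 1)
  simpa using h

lemma posdef_two {G : Type*} [AddCommGroup G] {f : G → ℂ} (hf : IsPosDefFn f)
    (z : G) (l : ℂ) :
    0 ≤ f 0 + (starRingEnd ℂ) l * f z + l * f (-z) + l * (starRingEnd ℂ) l * f 0 := by
  have h := hf 2 ![z, 0] ![1, l]
  rw [Fin.sum_univ_two] at h
  rw [Fin.sum_univ_two, Fin.sum_univ_two] at h
  simpa [add_assoc] using h

lemma posdef_conj {G : Type*} [AddCommGroup G] {f : G → ℂ} (hf : IsPosDefFn f)
    (z : G) : f (-z) = (starRingEnd ℂ) (f z) := by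
  have him0 : (f 0).im = 0 := by
    have := (Complex.le_def.mp (posdef_zero_le hf)).2
    simpa using this.symm
  have h1 := posdef_two hf z 1
  have h2 := posdef_two hf z Complex.I
  rw [Complex.le_def] at h1 h2
  have e1 := h1.2
  have e2 := h2.2
  simp [Complex.add_im, Complex.mul_im, Complex.conj_im, Complex.conj_re] at e1 e2
  apply Complex.ext
  · simp only [Complex.conj_re]; linarith
  · simp only [Complex.conj_im]; linarith

lemma posdef_norm_le {G : Type*} [AddCommGroup G] {f : G → ℂ} (hf : IsPosDefFn f)
    (z : G) : ‖f z‖ ≤ (f 0).re := by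
  rcases eq_or_ne (f z) 0 with h | h
  · simp [h]; exact (Complex.le_def.mp (posdef_zero_le hf)).1
  · have hr : (0:ℝ) < ‖f z‖ := norm_pos_iff.mpr h
    have hnz : (‖f z‖ : ℂ) ≠ 0 := by simpa using hr.ne'
    have hl := posdef_two hf z (-(f z / ‖f z‖))
    rw [posdef_conj hf z] at hl
    have k1 : (starRingEnd ℂ) (-(f z / ‖f z‖)) * f z = -‖f z‖ := by
      rw [map_neg, map_div₀, Complex.conj_ofReal, neg_mul, div_mul_eq_mul_div,
        mul_comm, Complex.mul_conj']
      rw [neg_eq_iff_eq_neg, neg_neg] at *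
      field_simp [pow_two]
    have k2 : (-(f z / ‖f z‖)) * (starRingEnd ℂ) (f z) = -‖f z‖ := by
      rw [neg_mul, div_mul_eq_mul_div, Complex.mul_conj']
      field_simp [pow_two]
    have k3 : (-(f z / ‖f z‖)) * (starRingEnd ℂ) (-(f z / ‖f z‖)) * f 0 = f 0 := by
      rw [map_neg, map_div₀, Complex.conj_ofReal, neg_mul_neg, div_mul_div_comm,
        Complex.mul_conj']
      rw [show ((‖f z‖:ℂ)) * ‖f z‖ = (‖f z‖:ℂ)^2 by ring]
      rw [div_self (by positivity), one_mul]
    rw [k1, k2, k3] at hl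
    have := (Complex.le_def.mp hl).1
    simp only [Complex.add_re, Complex.neg_re, Complex.ofReal_re, Complex.zero_re] at this
    linarith

lemma tri_integral (c : ℝ) (s t : ℝ) :
    ∫ u, (Set.Ioc s (s+c) ∩ Set.Ioc t (t+c)).indicator (1 : ℝ → ℝ) u
      = max (c - |s - t|) 0 := by
  rw [MeasureTheory.integral_indicator_one (measurableSet_Ioc.inter measurableSet_Ioc)]
  rw [Set.Ioc_inter_Ioc, Real.volume_real_Ioc]
  congr 1
  rw [min_add_add_right, abs_sub_comm]
  have := max_sub_min_eq_abs s t
  have h2 : max s t + min s t = s + t := max_add_min s t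
  linarith

lemma indicator_c_integrable (S : Set ℝ) (hS : MeasurableSet S) (hv : volume S < ⊤) :
    Integrable (fun u => ((S.indicator (1 : ℝ → ℝ) u : ℝ) : ℂ)) := by
  have : Integrable (S.indicator (1 : ℝ → ℝ)) := by
    rw [integrable_indicator_iff hS]
    exact integrableOn_const hv.ne
  exact this.ofReal

lemma triangle_posdef (c : ℝ) (hc : 0 < c) :
    IsPosDefFn (fun x : ℝ => ((max (c - |x|) 0 : ℝ) : ℂ)) := by
  intro N x cc
  set ind : Fin N → ℝ → ℂ := fun n u => (((Set.Ioc (x n) (x n + c)).indicator (1:ℝ→ℝ) u : ℝ) : ℂ)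
    with hind
  have indmul : ∀ (n m : Fin N) (u : ℝ), ind n u * ind m u
      = (((Set.Ioc (x n) (x n + c) ∩ Set.Ioc (x m) (x m + c)).indicator (1:ℝ→ℝ) u : ℝ) : ℂ) := by
    intro n m u
    simp only [hind, Set.indicator_apply, Set.mem_inter_iff]
    by_cases h1 : u ∈ Set.Ioc (x n) (x n + c) <;>
      by_cases h2 : u ∈ Set.Ioc (x m) (x m + c) <;> simp [h1, h2]
  set F : Fin N → Fin N → ℝ → ℂ :=
    fun n m u => (cc n * ind n u) * ((starRingEnd ℂ) (cc m) * ind m u) with hF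
  have key : ∀ n m : Fin N,
      cc n * (starRingEnd ℂ) (cc m) * ((max (c - |x n - x m|) 0 : ℝ) : ℂ)
        = ∫ u, F n m u := by
    intro n m
    have : ∀ u, F n m u
        = cc n * (starRingEnd ℂ) (cc m) * (((Set.Ioc (x n) (x n + c) ∩ Set.Ioc (x m) (x m + c)).indicator (1:ℝ→ℝ) u : ℝ) : ℂ) := by
      intro u; rw [hF, ← indmul n m u]; ring
    simp_rw [this]
    rw [integral_const_mul,
      show (∫ u, (((Set.Ioc (x n) (x n + c) ∩ Set.Ioc (x m) (x m + c)).indicator (1:ℝ→ℝ) u : ℝ):ℂ))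
        = ((∫ u, (Set.Ioc (x n) (x n + c) ∩ Set.Ioc (x m) (x m + c)).indicator (1:ℝ→ℝ) u : ℝ):ℂ)
        from integral_ofReal, tri_integral c]
  have integ : ∀ n m : Fin N, Integrable (F n m) := by
    intro n m
    have : ∀ u, F n m u
        = (cc n * (starRingEnd ℂ) (cc m)) * (((Set.Ioc (x n) (x n + c) ∩ Set.Ioc (x m) (x m + c)).indicator (1:ℝ→ℝ) u : ℝ) : ℂ) := by
      intro u; rw [hF, ← indmul n m u]; ring
    rw [show F n m = _ from funext this]
    exact (indicator_c_integrable _ (measurableSet_Ioc.inter measurableSet_Ioc)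
      ((measure_mono Set.inter_subset_left).trans_lt
        (by rw [Real.volume_Ioc]; exact ENNReal.ofReal_lt_top))).const_mul _
  simp_rw [key]
  have swap1 : ∀ n : Fin N, ∑ m : Fin N, ∫ u, F n m u = ∫ u, ∑ m : Fin N, F n m u :=
    fun n => (integral_finset_sum _ (fun m _ => integ n m)).symm
  simp_rw [swap1]
  rw [← integral_finset_sum _ (fun n _ => integrable_finset_sum _ (fun m _ => integ n m))]
  have factor : ∀ u, ∑ n : Fin N, ∑ m : Fin N, F n m u
      = ((Complex.normSq (∑ n : Fin N, cc n * ind n u) : ℝ) : ℂ) := by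
    intro u
    rw [← Complex.mul_conj, map_sum, Finset.sum_mul_sum]
    refine Finset.sum_congr rfl fun n _ => Finset.sum_congr rfl fun m _ => ?_
    simp only [hF, hind, map_mul, Complex.conj_ofReal]
  simp_rw [factor]
  rw [show (∫ u, ((Complex.normSq (∑ n : Fin N, cc n * ind n u) : ℝ) : ℂ))
      = ((∫ u, (Complex.normSq (∑ n : Fin N, cc n * ind n u) : ℝ) : ℝ) : ℂ) from integral_ofReal,
    Complex.zero_le_real]
  exact integral_nonneg fun u => Complex.normSq_nonneg _

lemma tri_total (c : ℝ) (hc : 0 < c) : ∫ x : ℝ, max (c - |x|) 0 = c^2 := by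
  have hsupp : ∀ x ∉ Set.Ioc (-c) c, max (c - |x|) 0 = 0 := by
    intro x hx
    rw [Set.mem_Ioc, not_and_or, not_lt, not_le] at hx
    rcases hx with h | h
    · rw [max_eq_right]; rw [abs_of_nonpos (by linarith)]; linarith
    · rw [max_eq_right]; rw [abs_of_pos (by linarith)]; linarith
  rw [← MeasureTheory.setIntegral_eq_integral_of_forall_compl_eq_zero hsupp]
  rw [← intervalIntegral.integral_of_le (by linarith : -c ≤ c)]
  rw [intervalIntegral.integral_congr (g := fun x => c - |x|) ?_]
  · rw [intervalIntegral.integral_sub intervalIntegrable_const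
      (_root_.continuous_abs.intervalIntegrable _ _)]
    have h1 : ∫ x in (-c)..c, (c:ℝ) = 2*c^2 := by
      rw [intervalIntegral.integral_const, smul_eq_mul]; ring
    have h2 : ∫ x in (-c)..c, |x| = c^2 := by
      rw [← intervalIntegral.integral_add_adjacent_intervals
        (b := 0) (_root_.continuous_abs.intervalIntegrable _ _) (_root_.continuous_abs.intervalIntegrable _ _)]
      have ha : ∫ x in (-c)..0, |x| = c^2/2 := by
        rw [intervalIntegral.integral_congr (g := fun x => -x)
          (fun x hx => by
            rw [Set.uIcc_of_le (by linarith : -c ≤ 0)] at hx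
            exact abs_of_nonpos hx.2)]
        rw [intervalIntegral.integral_neg, integral_id]
        ring
      have hb : ∫ x in (0:ℝ)..c, |x| = c^2/2 := by
        rw [intervalIntegral.integral_congr (g := fun x => x)
          (fun x hx => by
            rw [Set.uIcc_of_le (by linarith : (0:ℝ) ≤ c)] at hx
            exact abs_of_nonneg hx.1)]
        rw [integral_id]; ring
      rw [ha, hb]; ring
    rw [h1, h2]; ring
  · intro x hx
    rw [Set.uIcc_of_le (by linarith : -c ≤ c), Set.mem_Icc] at hx
    simp only
    have : |x| ≤ c := abs_le.mpr hx
    rw [max_eq_left (by linarith)]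

lemma tri_mem (a b c : ℝ) (hb : 0 < b) (hba : b < a) (hc : 0 < c) (hcb : c < b) :
    ENNReal.ofReal c ∈ {r : ℝ≥0∞ | ∃ f : ℝ → ℂ, Continuous f ∧ IsPosDefFn f ∧ f ≠ 0 ∧
        IsCompact (tsupport f) ∧
        tsupport f ⊆ Set.Ioo (-a) (-b) ∪ Set.Ioo (-b) b ∪ Set.Ioo b a ∧
        r = ENNReal.ofReal ((∫ x, f x).re / (f 0).re)} := by
  have hsupp : tsupport (fun x : ℝ => ((max (c - |x|) 0 : ℝ) : ℂ)) ⊆ Set.Icc (-c) c := by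
    apply closure_minimal ?_ isClosed_Icc
    intro x hx
    simp only [Function.mem_support, ne_eq, Complex.ofReal_eq_zero] at hx
    have : 0 < c - |x| := by
      rcases lt_or_ge 0 (c - |x|) with h | h
      · exact h
      · exact absurd (max_eq_right h) hx
    have := abs_le.mp (by linarith : |x| ≤ c)
    exact Set.mem_Icc.mpr this
  refine ⟨fun x : ℝ => ((max (c - |x|) 0 : ℝ) : ℂ), ?_, triangle_posdef c hc, ?_, ?_, ?_, ?_⟩
  · exact Complex.continuous_ofReal.comp ((continuous_const.sub _root_.continuous_abs).max continuous_const)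
  · intro h
    have := congrFun h 0
    simp only [Pi.zero_apply, abs_zero, sub_zero, Complex.ofReal_eq_zero] at this
    rw [max_eq_left hc.le] at this
    exact hc.ne' this
  · exact isCompact_Icc.of_isClosed_subset (isClosed_tsupport _) hsupp
  · refine hsupp.trans (fun x hx => ?_)
    rw [Set.mem_Icc] at hx
    exact Or.inl (Or.inr (Set.mem_Ioo.mpr ⟨by linarith, by linarith⟩))
  · have hint : (∫ x : ℝ, ((max (c - |x|) 0 : ℝ) : ℂ)) = ((c^2 : ℝ) : ℂ) := by
      rw [show (∫ x : ℝ, ((max (c - |x|) 0 : ℝ) : ℂ))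
          = ((∫ x : ℝ, max (c - |x|) 0 : ℝ) : ℂ) from integral_ofReal, tri_total c hc]
    rw [hint]
    simp only [abs_zero, sub_zero, Complex.ofReal_re]
    rw [max_eq_left hc.le]
    rw [show c^2/c = c from by field_simp [pow_two]]

noncomputable def Sm (f : ℝ → ℂ) (b : ℝ) (N : ℕ) (y : ℝ) : ℂ :=
  ∑ j : Fin N, ∑ j' : Fin N, f (y + ((((j:ℕ):ℤ) - ((j':ℕ):ℤ) : ℤ):ℝ) * b)

lemma step1 (f : ℝ → ℂ) (b : ℝ) (hpd : IsPosDefFn f) (hlat : ∀ k : ℤ, k ≠ 0 → f (k * b) = 0)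
    (N : ℕ) (x : ℝ) :
    (Sm f b N x).re + (Sm f b N (-x)).re ≤ 2 * N * (f 0).re := by
  classical
  set X : Fin (N+N) → ℝ := fun i =>
    if h : (i:ℕ) < N then ((i:ℕ):ℝ)*b else x + ((((i:ℕ) - N : ℕ)):ℝ)*b with hX
  set C : Fin (N+N) → ℂ := fun i => if (i:ℕ) < N then 1 else -1 with hC
  have h := hpd (N+N) X C
  have esum : ∀ (φ : Fin (N+N) → ℂ),
      ∑ i, φ i = ∑ j : Fin N, φ (Fin.castAdd N j) + ∑ j : Fin N, φ (Fin.natAdd N j) := by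
    intro φ
    rw [← Equiv.sum_comp (finSumFinEquiv (m := N) (n := N)) φ, Fintype.sum_sum_type]
    simp
  have hXL : ∀ j : Fin N, X (Fin.castAdd N j) = ((j:ℕ):ℝ)*b := by
    intro j; rw [hX]; simp [j.isLt]
  have hXR : ∀ j : Fin N, X (Fin.natAdd N j) = x + ((j:ℕ):ℝ)*b := by
    intro j; rw [hX]
    simp only [Fin.coe_natAdd]
    rw [dif_neg (by omega), show N + (j:ℕ) - N = (j:ℕ) by omega]
  have hCL : ∀ j : Fin N, C (Fin.castAdd N j) = 1 := by
    intro j; rw [hC]; simp [j.isLt]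
  have hCR : ∀ j : Fin N, C (Fin.natAdd N j) = -1 := by
    intro j; rw [hC]; simp
  have hdiag : ∀ j j' : Fin N, f (((j:ℕ):ℝ)*b - ((j':ℕ):ℝ)*b) = if j = j' then f 0 else 0 := by
    intro j j'
    by_cases hjj : j = j'
    · simp [hjj]
    · rw [if_neg hjj]
      rw [show ((j:ℕ):ℝ)*b - ((j':ℕ):ℝ)*b = ((((j:ℕ):ℤ) - ((j':ℕ):ℤ) : ℤ) : ℝ) * b by push_cast; ring]
      apply hlat
      intro hk
      exact hjj (Fin.ext (by omega))
  have hdsum : ∑ j : Fin N, ∑ j' : Fin N, f (((j:ℕ):ℝ)*b - ((j':ℕ):ℝ)*b) = (N:ℂ) * f 0 := by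
    simp_rw [hdiag]
    simp [Finset.sum_ite_eq]
  rw [esum] at h
  simp only [esum] at h
  rw [Finset.sum_add_distrib, Finset.sum_add_distrib] at h
  have HLL : ∑ j : Fin N, ∑ j' : Fin N,
      C (Fin.castAdd N j) * (starRingEnd ℂ) (C (Fin.castAdd N j')) * f (X (Fin.castAdd N j) - X (Fin.castAdd N j'))
      = (N:ℂ) * f 0 := by
    refine (Finset.sum_congr rfl fun j _ => Finset.sum_congr rfl fun j' _ => ?_).trans hdsum
    rw [hCL, hCL, hXL, hXL, map_one, one_mul, one_mul]
  have HRR : ∑ j : Fin N, ∑ j' : Fin N,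
      C (Fin.natAdd N j) * (starRingEnd ℂ) (C (Fin.natAdd N j')) * f (X (Fin.natAdd N j) - X (Fin.natAdd N j'))
      = (N:ℂ) * f 0 := by
    refine (Finset.sum_congr rfl fun j _ => Finset.sum_congr rfl fun j' _ => ?_).trans hdsum
    rw [hCR, hCR, hXR, hXR, show x + ((j:ℕ):ℝ)*b - (x + ((j':ℕ):ℝ)*b) = ((j:ℕ):ℝ)*b - ((j':ℕ):ℝ)*b by ring]
    simp
  have HLR : ∑ j : Fin N, ∑ j' : Fin N,
      C (Fin.castAdd N j) * (starRingEnd ℂ) (C (Fin.natAdd N j')) * f (X (Fin.castAdd N j) - X (Fin.natAdd N j'))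
      = - Sm f b N (-x) := by
    rw [show - Sm f b N (-x) = ∑ j : Fin N, ∑ j' : Fin N, -f (-x + ((((j:ℕ):ℤ) - ((j':ℕ):ℤ) : ℤ):ℝ) * b) by
      simp [Sm]]
    refine Finset.sum_congr rfl fun j _ => Finset.sum_congr rfl fun j' _ => ?_
    rw [hCL, hCR, hXL, hXR, show ((j:ℕ):ℝ)*b - (x + ((j':ℕ):ℝ)*b) = -x + ((((j:ℕ):ℤ) - ((j':ℕ):ℤ) : ℤ):ℝ)*b by push_cast; ring]
    simp
  have HRL : ∑ j : Fin N, ∑ j' : Fin N,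
      C (Fin.natAdd N j) * (starRingEnd ℂ) (C (Fin.castAdd N j')) * f (X (Fin.natAdd N j) - X (Fin.castAdd N j'))
      = - Sm f b N x := by
    rw [show - Sm f b N x = ∑ j : Fin N, ∑ j' : Fin N, -f (x + ((((j:ℕ):ℤ) - ((j':ℕ):ℤ) : ℤ):ℝ) * b) by
      simp [Sm]]
    refine Finset.sum_congr rfl fun j _ => Finset.sum_congr rfl fun j' _ => ?_
    rw [hCR, hCL, hXR, hXL, show x + ((j:ℕ):ℝ)*b - ((j':ℕ):ℝ)*b = x + ((((j:ℕ):ℤ) - ((j':ℕ):ℤ) : ℤ):ℝ)*b by push_cast; ring]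
    simp
  rw [HLL, HRR, HLR, HRL] at h
  have hre := (Complex.le_def.mp h).1
  simp only [Complex.add_re, Complex.neg_re, Complex.mul_re, Complex.natCast_re,
    Complex.natCast_im, Complex.zero_re, zero_mul, sub_zero] at hre
  linarith

noncomputable def Gm (f : ℝ → ℂ) (b : ℝ) (y : ℝ) : ℂ :=
  ∑ k ∈ Finset.Icc (-2:ℤ) 2, f (y + (k:ℝ) * b)

lemma step2 (f : ℝ → ℂ) (b : ℝ) (hnorm : ∀ z, ‖f z‖ ≤ (f 0).re) (N : ℕ) (y : ℝ)
    (hvan : ∀ k : ℤ, 2 < |k| → f (y + (k:ℝ) * b) = 0) :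
    ‖Sm f b N y - (N:ℂ) * Gm f b y‖ ≤ 40 * (f 0).re := by
  classical
  set F : ℤ → ℂ := fun k => f (y + (k:ℝ) * b) with hF
  set f0 : ℝ := (f 0).re with hf0
  have hf0nn : 0 ≤ f0 := le_trans (norm_nonneg _) (hnorm 0)
  have hFnorm : ∀ k : ℤ, ‖F k‖ ≤ f0 := fun k => hnorm _
  set T : Fin N → ℂ := fun j => ∑ i ∈ Finset.range N, F ((j:ℕ) - (i:ℤ)) with hT
  have hSm : Sm f b N y = ∑ j : Fin N, T j := by
    refine Finset.sum_congr rfl fun j _ => ?_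
    rw [hT]
    exact Fin.sum_univ_eq_sum_range (fun i => F ((j:ℕ) - (i:ℤ))) N
  have hGnorm : ‖Gm f b y‖ ≤ 5 * f0 := by
    refine (norm_sum_le _ _).trans ?_
    have : ∑ k ∈ Finset.Icc (-2:ℤ) 2, ‖f (y + (k:ℝ)*b)‖ ≤ ∑ k ∈ Finset.Icc (-2:ℤ) 2, f0 :=
      Finset.sum_le_sum fun k _ => hnorm _
    refine this.trans ?_
    rw [Finset.sum_const]
    simp
  have hTnorm : ∀ j : Fin N, ‖T j‖ ≤ 5 * f0 := by
    intro j
    simp only [hT]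
    rw [← Finset.sum_filter_of_ne (p := fun i => (j:ℕ) ≤ i + 2 ∧ i ≤ (j:ℕ) + 2)
      (fun i _ hne => by
        by_contra hc
        push_neg at hc
        exact hne (hvan (((j:ℕ):ℤ) - (i:ℤ)) (lt_abs.mpr (by omega))))]
    refine (norm_sum_le _ _).trans ?_
    have h1 : ∑ i ∈ (Finset.range N).filter (fun i => (j:ℕ) ≤ i + 2 ∧ i ≤ (j:ℕ) + 2),
        ‖F ((j:ℕ) - (i:ℤ))‖ ≤ ∑ i ∈ (Finset.range N).filter (fun i => (j:ℕ) ≤ i + 2 ∧ i ≤ (j:ℕ) + 2), f0 :=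
      Finset.sum_le_sum fun i _ => hFnorm _
    refine h1.trans ?_
    rw [Finset.sum_const]
    have hcard : ((Finset.range N).filter (fun i => (j:ℕ) ≤ i + 2 ∧ i ≤ (j:ℕ) + 2)).card ≤ 5 := by
      refine le_trans (Finset.card_le_card (t := Finset.Icc ((j:ℕ) - 2) ((j:ℕ) + 2)) ?_) ?_
      · intro i hi
        simp only [Finset.mem_filter, Finset.mem_range] at hi
        rw [Finset.mem_Icc]
        omega
      · rw [Nat.card_Icc]; omega
    rw [nsmul_eq_mul]
    exact mul_le_mul_of_nonneg_right (by exact_mod_cast hcard) hf0nn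
  have hmid : ∀ j : Fin N, 2 ≤ (j:ℕ) → (j:ℕ) + 3 ≤ N → T j = Gm f b y := by
    intro j hj2 hj3
    simp only [hT]
    rw [← Finset.sum_subset (s₁ := Finset.Icc ((j:ℕ) - 2) ((j:ℕ) + 2)) (s₂ := Finset.range N)
      (by intro i hi; rw [Finset.mem_Icc] at hi; rw [Finset.mem_range]; omega)
      (by
        intro i _ hni
        rw [Finset.mem_Icc] at hni
        exact hvan (((j:ℕ):ℤ) - (i:ℤ)) (lt_abs.mpr (by omega)))]
    refine Finset.sum_nbij' (i := fun i => ((j:ℕ) : ℤ) - i) (j := fun k => (((j:ℕ) : ℤ) - k).toNat)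
      ?_ ?_ ?_ ?_ ?_
    · intro i hi; rw [Finset.mem_Icc] at hi ⊢; omega
    · intro k hk; rw [Finset.mem_Icc] at hk ⊢; omega
    · intro i hi; rw [Finset.mem_Icc] at hi; omega
    · intro k hk; rw [Finset.mem_Icc] at hk; omega
    · intro i _; rfl
  -- now split into good and bad
  have hNG : (N:ℂ) * Gm f b y = ∑ _j : Fin N, Gm f b y := by
    rw [Finset.sum_const, Finset.card_univ, Fintype.card_fin, nsmul_eq_mul]
  rw [hSm, hNG, ← Finset.sum_sub_distrib]
  set bad := Finset.univ.filter (fun j : Fin N => ¬(2 ≤ (j:ℕ) ∧ (j:ℕ) + 3 ≤ N)) with hbad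
  rw [← Finset.sum_filter_of_ne (p := fun j : Fin N => ¬(2 ≤ (j:ℕ) ∧ (j:ℕ) + 3 ≤ N))
    (fun j _ hne => by
      intro hgood
      exact hne (by rw [hmid j hgood.1 hgood.2, sub_self]))]
  refine (norm_sum_le _ _).trans ?_
  have each : ∀ j ∈ bad, ‖T j - Gm f b y‖ ≤ 10 * f0 := by
    intro j _
    refine (norm_sub_le _ _).trans ?_
    have := hTnorm j
    linarith
  refine (Finset.sum_le_sum each).trans ?_
  rw [Finset.sum_const]
  have hcard : bad.card ≤ 4 := by
    have himg : bad.image (fun j : Fin N => (j:ℕ)) ⊆ Finset.range 2 ∪ Finset.Icc (N-2) (N-1) := by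
      intro v hv
      rw [Finset.mem_image] at hv
      obtain ⟨j, hj, rfl⟩ := hv
      rw [hbad, Finset.mem_filter] at hj
      have := j.isLt
      rw [Finset.mem_union, Finset.mem_range, Finset.mem_Icc]
      omega
    have : bad.card = (bad.image (fun j : Fin N => (j:ℕ))).card :=
      (Finset.card_image_of_injective bad Fin.val_injective).symm
    rw [this]
    refine (Finset.card_le_card himg).trans ?_
    refine (Finset.card_union_le _ _).trans ?_
    rw [Finset.card_range, Nat.card_Icc]
    omega
  rw [nsmul_eq_mul]
  have hc4 : (bad.card : ℝ) ≤ 4 := by exact_mod_cast hcard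
  nlinarith [hf0nn]

lemma step3 (f : ℝ → ℂ) (b : ℝ) (hb : 0 < b) (hpd : IsPosDefFn f)
    (hnorm : ∀ z, ‖f z‖ ≤ (f 0).re)
    (hlat : ∀ k : ℤ, k ≠ 0 → f (k * b) = 0)
    (hvanfar : ∀ y : ℝ, 2*b ≤ |y| → f y = 0)
    (x : ℝ) (hx : |x| ≤ b) :
    (Gm f b x).re + (Gm f b (-x)).re ≤ 2 * (f 0).re := by
  set f0 : ℝ := (f 0).re with hf0
  have hf0nn : 0 ≤ f0 := le_trans (norm_nonneg _) (hnorm 0)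
  have hvan : ∀ y : ℝ, |y| ≤ b → ∀ k : ℤ, 2 < |k| → f (y + (k:ℝ) * b) = 0 := by
    intro y hy k hk
    apply hvanfar
    have h3 : (3:ℝ) ≤ |(k:ℝ)| := by
      rw [show |(k:ℝ)| = ((|k| : ℤ) : ℝ) by push_cast [Int.cast_abs]; ring]
      exact_mod_cast (by omega : (3:ℤ) ≤ |k|)
    have habs : |(k:ℝ) * b| = |(k:ℝ)| * b := by
      rw [abs_mul, abs_of_pos hb]
    have : |(k:ℝ)*b| ≤ |y + (k:ℝ)*b| + |y| := by
      calc |(k:ℝ)*b| = |(y + (k:ℝ)*b) - y| := by ring_nf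
        _ ≤ |y + (k:ℝ)*b| + |y| := abs_sub _ _
    nlinarith
  have key : ∀ N : ℕ, (N:ℝ) * ((Gm f b x).re + (Gm f b (-x)).re) ≤ 2*N*f0 + 80*f0 := by
    intro N
    have h1 := step1 f b hpd hlat N x
    have h2 := step2 f b hnorm N x (hvan x hx)
    have h3 := step2 f b hnorm N (-x) (hvan (-x) (by rwa [abs_neg]))
    have hre : ∀ y : ℝ, |(Sm f b N y).re - (N:ℝ) * (Gm f b y).re| ≤ ‖Sm f b N y - (N:ℂ) * Gm f b y‖ := by
      intro y
      have : (Sm f b N y - (N:ℂ) * Gm f b y).re = (Sm f b N y).re - (N:ℝ) * (Gm f b y).re := by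
        simp [Complex.sub_re, Complex.mul_re]
      rw [← this]
      exact Complex.abs_re_le_norm _
    have e2 := (abs_le.mp ((hre x).trans h2)).1
    have e3 := (abs_le.mp ((hre (-x)).trans h3)).1
    nlinarith
  by_contra hcon
  push_neg at hcon
  set d : ℝ := (Gm f b x).re + (Gm f b (-x)).re - 2*f0 with hd
  have hdpos : 0 < d := by rw [hd]; linarith
  obtain ⟨N, hN⟩ := exists_nat_gt ((80*f0)/d)
  have h80 : (N:ℝ)*d ≤ 80*f0 := by
    have := key N
    rw [hd]; nlinarith
  rw [div_lt_iff₀ hdpos] at hN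
  linarith

lemma step4 (f : ℝ → ℂ) (b : ℝ) (hb : 0 < b)
    (hcont : Continuous f) (hcomp : IsCompact (tsupport f))
    (hvanfar : ∀ y : ℝ, 2*b ≤ |y| → f y = 0)
    (hG : ∀ x ∈ Set.Icc (0:ℝ) b, (Gm f b x).re + (Gm f b (-x)).re ≤ 2 * (f 0).re) :
    (∫ x, f x).re ≤ b * (f 0).re := by
  set φ : ℝ → ℝ := fun y => (f y).re with hphi
  set f0 : ℝ := (f 0).re with hf0
  have hφc : Continuous φ := Complex.continuous_re.comp hcont
  have hGc : Continuous (fun y => (Gm f b y).re) := by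
    apply Complex.continuous_re.comp
    apply continuous_finset_sum
    intro k _
    exact hcont.comp (continuous_id.add continuous_const)
  have hGnc : Continuous (fun y => (Gm f b (-y)).re) := hGc.comp continuous_neg
  -- integral inequality
  have mono : ∫ x in (0:ℝ)..b, ((Gm f b x).re + (Gm f b (-x)).re)
      ≤ ∫ _x in (0:ℝ)..b, 2*f0 := by
    apply intervalIntegral.integral_mono_on hb.le
      ((hGc.add hGnc).intervalIntegrable 0 b) (intervalIntegrable_const)
    exact hG
  rw [intervalIntegral.integral_const, smul_eq_mul] at mono
  rw [intervalIntegral.integral_add (hGc.intervalIntegrable 0 b) (hGnc.intervalIntegrable 0 b)] at mono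
  have hneg : ∫ x in (0:ℝ)..b, (Gm f b (-x)).re = ∫ x in (-b)..(0:ℝ), (Gm f b x).re := by
    rw [intervalIntegral.integral_comp_neg (fun x => (Gm f b x).re)]
    norm_num
  rw [hneg] at mono
  have hadj : (∫ x in (-b)..(0:ℝ), (Gm f b x).re) + ∫ x in (0:ℝ)..b, (Gm f b x).re
      = ∫ x in (-b)..b, (Gm f b x).re :=
    intervalIntegral.integral_add_adjacent_intervals
      (hGc.intervalIntegrable _ _) (hGc.intervalIntegrable _ _)
  rw [add_comm, hadj] at mono
  -- expand Gm
  have hGre : ∀ x : ℝ, (Gm f b x).re = ∑ k ∈ Finset.Icc (-2:ℤ) 2, φ (x + (k:ℝ)*b) := by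
    intro x
    rw [Gm, Complex.re_sum]
  simp_rw [hGre] at mono
  rw [intervalIntegral.integral_finset_sum (fun (k : ℤ) (_ : k ∈ Finset.Icc (-2:ℤ) 2) =>
    (show Continuous (fun x : ℝ => φ (x + (k:ℝ)*b)) from
      hφc.comp (continuous_id.add continuous_const)).intervalIntegrable (-b) b)] at mono
  have hS : ∀ k : ℤ, (∫ x in (-b)..b, φ (x + (k:ℝ)*b))
      = ∫ x in (-b + (k:ℝ)*b)..(b + (k:ℝ)*b), φ x := fun k =>
    intervalIntegral.integral_comp_add_right φ ((k:ℝ)*b)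
  have hicc : Finset.Icc (-2:ℤ) 2 = insert (-2) (insert (-1) (insert 0 (insert 1 ({2} : Finset ℤ)))) := by
    decide
  rw [hicc, Finset.sum_insert (by decide), Finset.sum_insert (by decide),
    Finset.sum_insert (by decide), Finset.sum_insert (by decide), Finset.sum_singleton] at mono
  rw [hS, hS, hS, hS, hS] at mono
  set I : ℝ := ∫ x, φ x with hI
  have hfull : ∀ c : ℝ, 2*b ≤ c → (∫ x in (-c)..c, φ x) = I := by
    intro c hc
    rw [intervalIntegral.integral_of_le (by linarith), hI]
    apply setIntegral_eq_integral_of_forall_compl_eq_zero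
    intro x hx
    rw [Set.mem_Ioc] at hx
    rw [not_and_or, not_lt, not_le] at hx
    have : 2*b ≤ |x| := by
      rcases hx with h | h
      · rw [abs_of_nonpos (by linarith)]; linarith
      · rw [abs_of_pos (by linarith)]; linarith
    rw [hphi]
    simp [hvanfar x this]
  have e1 : (∫ x in (-b + ((-2:ℤ):ℝ)*b)..(b + ((-2:ℤ):ℝ)*b), φ x) = ∫ x in (-(3*b))..(-b), φ x := by
    congr 1 <;> push_cast <;> ring
  have e2 : (∫ x in (-b + ((-1:ℤ):ℝ)*b)..(b + ((-1:ℤ):ℝ)*b), φ x) = ∫ x in (-(2*b))..(0:ℝ), φ x := by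
    congr 1 <;> push_cast <;> ring
  have e3 : (∫ x in (-b + ((0:ℤ):ℝ)*b)..(b + ((0:ℤ):ℝ)*b), φ x) = ∫ x in (-b)..b, φ x := by
    congr 1 <;> push_cast <;> ring
  have e4 : (∫ x in (-b + ((1:ℤ):ℝ)*b)..(b + ((1:ℤ):ℝ)*b), φ x) = ∫ x in (0:ℝ)..(2*b), φ x := by
    congr 1 <;> push_cast <;> ring
  have e5 : (∫ x in (-b + ((2:ℤ):ℝ)*b)..(b + ((2:ℤ):ℝ)*b), φ x) = ∫ x in b..(3*b), φ x := by
    congr 1 <;> push_cast <;> ring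
  rw [e1, e2, e3, e4, e5] at mono
  have A1 : (∫ x in (-(3*b))..(-b), φ x) + ∫ x in (-b)..b, φ x = ∫ x in (-(3*b))..b, φ x :=
    intervalIntegral.integral_add_adjacent_intervals (hφc.intervalIntegrable _ _) (hφc.intervalIntegrable _ _)
  have A2 : (∫ x in (-(3*b))..b, φ x) + ∫ x in b..(3*b), φ x = ∫ x in (-(3*b))..(3*b), φ x :=
    intervalIntegral.integral_add_adjacent_intervals (hφc.intervalIntegrable _ _) (hφc.intervalIntegrable _ _)
  have A3 : (∫ x in (-(2*b))..(0:ℝ), φ x) + ∫ x in (0:ℝ)..(2*b), φ x = ∫ x in (-(2*b))..(2*b), φ x :=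
    intervalIntegral.integral_add_adjacent_intervals (hφc.intervalIntegrable _ _) (hφc.intervalIntegrable _ _)
  have F1 : (∫ x in (-(3*b))..(3*b), φ x) = I := hfull (3*b) (by linarith)
  have F2 : (∫ x in (-(2*b))..(2*b), φ x) = I := hfull (2*b) (by linarith)
  have hIle : 2 * I ≤ 2 * b * f0 := by linarith
  have hre : (∫ x, f x).re = I := by
    rw [hI, hphi]
    exact (integral_re (hcont.integrable_of_hasCompactSupport hcomp)).symm
  rw [hre]
  linarith


theorem turanConst_interval_minus_two_points
    (a b : ℝ) (hb : 0 < b) (hba : b < a) (hab : a ≤ 2 * b) :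
    sSup {r : ℝ≥0∞ | ∃ f : ℝ → ℂ, Continuous f ∧ IsPosDefFn f ∧ f ≠ 0 ∧
        IsCompact (tsupport f) ∧
        tsupport f ⊆ Set.Ioo (-a) (-b) ∪ Set.Ioo (-b) b ∪ Set.Ioo b a ∧
        r = ENNReal.ofReal ((∫ x, f x).re / (f 0).re)}
      = ENNReal.ofReal b := by
  apply le_antisymm
  · apply sSup_le
    rintro r ⟨f, hcont, hpd, hne, hcomp, hsub, rfl⟩
    have hnorm : ∀ z, ‖f z‖ ≤ (f 0).re := posdef_norm_le hpd
    have hf0nn : 0 ≤ (f 0).re := le_trans (norm_nonneg _) (hnorm 0)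
    have hf0pos : 0 < (f 0).re := by
      rcases eq_or_lt_of_le hf0nn with h | h
      · exfalso
        apply hne
        funext z
        have hz := hnorm z
        rw [← h] at hz
        simpa using norm_le_zero_iff.mp hz
      · exact h
    have hzero : ∀ y : ℝ,
        y ∉ (Set.Ioo (-a) (-b) ∪ Set.Ioo (-b) b ∪ Set.Ioo b a) → f y = 0 :=
      fun y hy => image_eq_zero_of_notMem_tsupport (fun hmem => hy (hsub hmem))
    have hvan' : ∀ y : ℝ, (a ≤ |y| ∨ y = b ∨ y = -b) → f y = 0 := by
      intro y hy
      apply hzero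
      intro hmem
      simp only [Set.mem_union, Set.mem_Ioo] at hmem
      rcases hy with habs | rfl | rfl
      · rcases le_abs.mp habs with h | h <;>
          rcases hmem with (⟨h1, h2⟩ | ⟨h1, h2⟩) | ⟨h1, h2⟩ <;> linarith
      · rcases hmem with (⟨h1, h2⟩ | ⟨h1, h2⟩) | ⟨h1, h2⟩ <;> linarith
      · rcases hmem with (⟨h1, h2⟩ | ⟨h1, h2⟩) | ⟨h1, h2⟩ <;> linarith
    have hvanfar : ∀ y : ℝ, 2*b ≤ |y| → f y = 0 := by
      intro y hy
      exact hvan' y (Or.inl (le_trans (by linarith) hy))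
    have hlat : ∀ k : ℤ, k ≠ 0 → f ((k:ℝ) * b) = 0 := by
      intro k hk
      have h1 : k = 1 ∨ k = -1 ∨ (2 ≤ k ∨ k ≤ -2) := by omega
      rcases h1 with rfl | rfl | h2
      · rw [show ((1:ℤ):ℝ)*b = b by push_cast; ring]
        exact hvan' b (Or.inr (Or.inl rfl))
      · rw [show ((-1:ℤ):ℝ)*b = -b by push_cast; ring]
        exact hvan' (-b) (Or.inr (Or.inr rfl))
      · apply hvanfar
        rw [abs_mul, abs_of_pos hb]
        have hk2 : (2:ℝ) ≤ |(k:ℝ)| := by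
          rcases h2 with h | h
          · rw [_root_.abs_of_nonneg (by exact_mod_cast (by omega : (0:ℤ) ≤ k) : (0:ℝ) ≤ (k:ℝ))]
            exact_mod_cast h
          · rw [_root_.abs_of_nonpos (by exact_mod_cast (by omega : k ≤ (0:ℤ)) : (k:ℝ) ≤ 0)]
            have : (k:ℝ) ≤ -2 := by exact_mod_cast h
            linarith
        nlinarith
    have step3' : ∀ x ∈ Set.Icc (0:ℝ) b,
        (Gm f b x).re + (Gm f b (-x)).re ≤ 2 * (f 0).re := by
      intro x hx
      rw [Set.mem_Icc] at hx
      exact step3 f b hb hpd hnorm hlat hvanfar x (abs_le.mpr ⟨by linarith, hx.2⟩)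
    have hint := step4 f b hb hcont hcomp hvanfar step3'
    apply ENNReal.ofReal_le_ofReal
    rw [div_le_iff₀ hf0pos]
    linarith
  · refine le_of_forall_lt fun r hr => ?_
    have hrtop : r ≠ ⊤ := ne_top_of_lt hr
    have hrlt : r.toReal < b := by
      rwa [← ENNReal.lt_ofReal_iff_toReal_lt hrtop]
    have hrnn : 0 ≤ r.toReal := ENNReal.toReal_nonneg
    set c : ℝ := (r.toReal + b)/2 with hc
    have hc0 : 0 < c := by rw [hc]; linarith
    have hcb : c < b := by rw [hc]; linarith
    have hmem := tri_mem a b c hb hba hc0 hcb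
    calc r < ENNReal.ofReal c := by
          rw [ENNReal.lt_ofReal_iff_toReal_lt hrtop, hc]
          linarith
      _ ≤ _ := le_sSup hmem
end
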